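/- arXiv:2507.06182 — 9 statements merged into one kernel-verified Lean document; each statement's English description precedes it below -/
import Mathlib

section
/- Given an index set I, an integer interval Z, a sequence i = (i_k)_{k ∈ Z} of elements of I, an integer c ∈ Z, and a finite sequence (E_k)_{1 ≤ k < l} of symbols in {L, R}, the recursively defined sequence of intervals 𝔠_1 = {c}, and 𝔠_k = [ã_{k-1} - 1, b̃_{k-1}} if E_{k-1} = L, 𝔠_k = {ã_{k-1}, b̃_{k-1} + 1] if E_{k-1} = R (where [ã_s, b̃_s] denotes the union of 𝔠_1, ..., 𝔠_s), is a chain of i-boxes: each 𝔠_k is an i-box, each partial union is an interval of length k, and each 𝔠_k is the largest i-box of its color contained in the partial union. -/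
open Classical

/-! Positive part `[x]_+ = max(x,0)`. -/
def intPos (x : ℤ) : ℤ := max x 0

/-! ## Matrix mutation (over an arbitrary index type) -/

/-- Fomin–Zelevinsky matrix mutation of `B` at index `s`. -/
def mutK {K : Type*} [DecidableEq K] (B : K → K → ℤ) (s x y : K) : ℤ :=
  if x = s ∨ y = s then - B x y
  else B x y + intPos (B x s) * intPos (B s y) - intPos (- B x s) * intPos (- B s y)

/-! ## The sequence `i` and occurrence operators -/

/-- `obelow i j y` is the largest `t ≤ y` with `i t = j`  (the operator `y(j)^⊖`). -/
noncomputable def obelow {I : Type*} (i : ℤ → I) (j : I) (y : ℤ) : ℤ :=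
  sSup {t : ℤ | t ≤ y ∧ i t = j}

/-- `oabove i j x` is the smallest `t ≥ x` with `i t = j`  (the operator `x(j)^⊕`). -/
noncomputable def oabove {I : Type*} (i : ℤ → I) (j : I) (x : ℤ) : ℤ :=
  sInf {t : ℤ | x ≤ t ∧ i t = j}

/-- Every letter occurring in `i` occurs (unboundedly) below and above every position;
this guarantees that all the operators `(-)^±, (-)^⊕, (-)^⊖` are well defined. -/
def OccAll {I : Type*} (i : ℤ → I) : Prop :=
  ∀ t x : ℤ, (∃ s, s ≤ x ∧ i s = i t) ∧ (∃ s, x ≤ s ∧ i s = i t)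

/-! ## Chains of i-boxes: abstract characterization -/

/-- `IsIBoxChain i l a b atil btil` says that the boxes `𝔠_k = [a k, b k]` (for `1 ≤ k ≤ l`)
form a chain of `i`-boxes with partial unions `[atil s, btil s]`:
each `𝔠_k` is an `i`-box, each partial union is an interval of length `s`,
and `𝔠_s` is the largest `i`-box of its color contained in the partial union. -/
structure IsIBoxChain {I : Type*} (i : ℤ → I) (l : ℕ) (a b atil btil : ℕ → ℤ) : Prop where
  ibox : ∀ k, 1 ≤ k → k ≤ l → a k ≤ b k ∧ i (a k) = i (b k)
  union_eq : ∀ s, 1 ≤ s → s ≤ l →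
    (⋃ k ∈ Set.Icc 1 s, Set.Icc (a k) (b k)) = Set.Icc (atil s) (btil s)
  union_len : ∀ s, 1 ≤ s → s ≤ l → btil s - atil s + 1 = (s : ℤ)
  largest : ∀ s, 1 ≤ s → s ≤ l → ∀ t, atil s ≤ t → t ≤ btil s → i t = i (a s) →
    a s ≤ t ∧ t ≤ b s

/-! ## Chains of i-boxes from a rooted sequence of expansion operators `(c, E)`
(`E m = true` encodes `L`, `E m = false` encodes `R`). -/

/-- Left end `ã_k` of the `k`-th partial union of the chain with data `(c, E)`. -/
def atilP (c : ℤ) (E : ℕ → Bool) (k : ℕ) : ℤ :=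
  c - ((Finset.Ico 1 k).filter (fun m => E m = true)).card

/-- Right end `b̃_k` of the `k`-th partial union of the chain with data `(c, E)`. -/
def btilP (c : ℤ) (E : ℕ → Bool) (k : ℕ) : ℤ :=
  c + ((Finset.Ico 1 k).filter (fun m => E m = false)).card

/-- Left end `a_k` of the `k`-th box of the chain with data `(c, E)`:
`𝔠_1 = {c}`, `𝔠_k = [ã_{k-1} - 1, b̃_{k-1}}` if `E (k-1) = L`, and
`𝔠_k = {ã_{k-1}, b̃_{k-1} + 1]` if `E (k-1) = R`. -/
noncomputable def aP {I : Type*} (i : ℤ → I) (c : ℤ) (E : ℕ → Bool) (k : ℕ) : ℤ :=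
  if k = 1 then c
  else if E (k - 1) then atilP c E k
  else oabove i (i (btilP c E k)) (atilP c E k)

/-- Right end `b_k` of the `k`-th box of the chain with data `(c, E)`. -/
noncomputable def bP {I : Type*} (i : ℤ → I) (c : ℤ) (E : ℕ → Bool) (k : ℕ) : ℤ :=
  if k = 1 then c
  else if E (k - 1) then obelow i (i (atilP c E k)) (btilP c E k)
  else btilP c E k

/-- The color of the `k`-th box of the chain with data `(c, E)`. -/
noncomputable def colorP {I : Type*} (i : ℤ → I) (c : ℤ) (E : ℕ → Bool) (k : ℕ) : I :=
  i (aP i c E k)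

/-- The sign `ε_k` of the `k`-th letter of the signed word associated to a chain:
`+1` if `k = 1` or `E_{k-1} = L`, and `-1` if `E_{k-1} = R`. -/
def epsP (E : ℕ → Bool) (k : ℕ) : ℤ :=
  if k = 1 ∨ E (k - 1) = true then 1 else -1

/-! ## Box moves -/

/-- The box move `ν_s` on the data `(c, E)` of a chain of i-boxes. -/
def nuMove (s : ℕ) (p : ℤ × (ℕ → Bool)) : ℤ × (ℕ → Bool) :=
  (if s = 1 then (if p.2 1 then p.1 - 1 else p.1 + 1) else p.1,
   fun k => if k = s - 1 ∨ k = s then !(p.2 k) else p.2 k)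

/-- `𝔠_s` is a movable box of the chain of length `l` with data `p = (c, E)`. -/
def Movable (l s : ℕ) (p : ℤ × (ℕ → Bool)) : Prop :=
  1 ≤ s ∧ s < l ∧ (s = 1 ∨ (2 ≤ s ∧ p.2 (s - 1) ≠ p.2 s))

/-- One box move (at some movable position) relating two chains. -/
def moveRel (l : ℕ) (p q : ℤ × (ℕ → Bool)) : Prop :=
  ∃ s, Movable l s p ∧ q = nuMove s p

/-- Two chain data `(c, E)`, `(c', E')` of length `l` describe the same chain:
same root and same expansion operators on the relevant range `[1, l-1]`. -/
def pairEqOn (l : ℕ) (p q : ℤ × (ℕ → Bool)) : Prop :=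
  p.1 = q.1 ∧ ∀ m, 1 ≤ m → m < l → p.2 m = q.2 m

/-! ## Signed words and the Berenstein–Fomin–Zelevinsky matrix -/

/-- `nxt h l k = k[1]`, the smallest `k' ∈ [k+1, l]` with `h k' = h k`, as an
element of `ℕ∞` (`⊤ = ∞` if there is none). -/
noncomputable def nxt {I : Type*} (h : ℕ → I) (l k : ℕ) : ℕ∞ :=
  sInf {x : ℕ∞ | ∃ k' : ℕ, x = (k' : ℕ∞) ∧ k < k' ∧ k' ≤ l ∧ h k' = h k}

/-- The exchangeable indices `K^ex` of a word of length `l` with letters `h`. -/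
def Kex {I : Type*} (h : ℕ → I) (l : ℕ) : Set ℕ :=
  {s | 1 ≤ s ∧ ∃ t, s < t ∧ t ≤ l ∧ h t = h s}

/-- BFZ case: `ε_{j[1]} = ε_k` and `j < k < j[1] < k[1]`. -/
noncomputable def condI {I : Type*} (ε : ℕ → ℤ) (h : ℕ → I) (l j k : ℕ) : Prop :=
  ∃ j1 : ℕ, nxt h l j = (j1 : ℕ∞) ∧ ε j1 = ε k ∧ j < k ∧ k < j1 ∧ (j1 : ℕ∞) < nxt h l k

/-- BFZ case: `ε_k = -ε_{k[1]}` and `j < k < k[1] < j[1]`. -/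
noncomputable def condII {I : Type*} (ε : ℕ → ℤ) (h : ℕ → I) (l j k : ℕ) : Prop :=
  ∃ k1 : ℕ, nxt h l k = (k1 : ℕ∞) ∧ ε k = - ε k1 ∧ j < k ∧ k < k1 ∧ (k1 : ℕ∞) < nxt h l j

/-- BFZ case: `ε_{k[1]} = ε_j` and `k < j < k[1] < j[1]`. -/
noncomputable def condIII {I : Type*} (ε : ℕ → ℤ) (h : ℕ → I) (l j k : ℕ) : Prop :=
  ∃ k1 : ℕ, nxt h l k = (k1 : ℕ∞) ∧ ε k1 = ε j ∧ k < j ∧ j < k1 ∧ (k1 : ℕ∞) < nxt h l j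

/-- BFZ case: `ε_j = -ε_{j[1]}` and `k < j < j[1] < k[1]`. -/
noncomputable def condIV {I : Type*} (ε : ℕ → ℤ) (h : ℕ → I) (l j k : ℕ) : Prop :=
  ∃ j1 : ℕ, nxt h l j = (j1 : ℕ∞) ∧ ε j = - ε j1 ∧ k < j ∧ j < j1 ∧ (j1 : ℕ∞) < nxt h l k

/-- The Berenstein–Fomin–Zelevinsky matrix `B̃(h)` of the signed word with letters `h`
and signs `ε` of length `l`, over the generalized Cartan matrix `C`. -/
noncomputable def Btilde {I : Type*} (C : I → I → ℤ) (ε : ℕ → ℤ) (h : ℕ → I)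
    (l j k : ℕ) : ℤ :=
  if nxt h l j = (k : ℕ∞) then ε k
  else if nxt h l k = (j : ℕ∞) then - ε j
  else if condI ε h l j k ∨ condII ε h l j k then ε k * C (h j) (h k)
  else if condIII ε h l j k ∨ condIV ε h l j k then - (ε j * C (h j) (h k))
  else 0

/-- The Kashiwara–Kim–Oh–Park initial exchange matrix `B(𝔠_-^{[a,b]})`
(for the word with letters `h k = i_{b-k+1}`, all signs being `+1`). -/
noncomputable def Binit {I : Type*} (C : I → I → ℤ) (h : ℕ → I) (l j k : ℕ) : ℤ :=
  if nxt h l j = (k : ℕ∞) then 1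
  else if nxt h l k = (j : ℕ∞) then -1
  else if j < k ∧ (k : ℕ∞) < nxt h l j ∧ nxt h l j < nxt h l k then C (h j) (h k)
  else if k < j ∧ (j : ℕ∞) < nxt h l k ∧ nxt h l k < nxt h l j then - C (h j) (h k)
  else 0

lemma obelow_spec {I : Type*} (i : ℤ → I) {j : I} {x y : ℤ} (hx : x ≤ y) (hj : i x = j) :
    x ≤ obelow i j y ∧ obelow i j y ≤ y ∧ i (obelow i j y) = j := by
  have hne : {t : ℤ | t ≤ y ∧ i t = j}.Nonempty := ⟨x, hx, hj⟩
  have hbdd : BddAbove {t : ℤ | t ≤ y ∧ i t = j} := ⟨y, fun t ht => ht.1⟩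
  have hmem := Int.csSup_mem hne hbdd
  exact ⟨le_csSup hbdd ⟨hx, hj⟩, hmem.1, hmem.2⟩

lemma oabove_spec {I : Type*} (i : ℤ → I) {j : I} {x y : ℤ} (hx : x ≤ y) (hj : i y = j) :
    x ≤ oabove i j x ∧ oabove i j x ≤ y ∧ i (oabove i j x) = j := by
  have hne : {t : ℤ | x ≤ t ∧ i t = j}.Nonempty := ⟨y, hx, hj⟩
  have hbdd : BddBelow {t : ℤ | x ≤ t ∧ i t = j} := ⟨x, fun t ht => ht.1⟩
  have hmem := Int.csInf_mem hne hbdd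
  exact ⟨hmem.1, csInf_le hbdd ⟨hx, hj⟩, hmem.2⟩

lemma atilP_succ (c : ℤ) (E : ℕ → Bool) (k : ℕ) (hk : 1 ≤ k) :
    atilP c E (k + 1) = atilP c E k - (if E k then 1 else 0) := by
  unfold atilP
  rw [Nat.Ico_succ_right_eq_insert_Ico hk, Finset.filter_insert]
  by_cases h : E k = true <;>
    simp [h, Finset.card_insert_of_notMem (by simp : k ∉ Finset.Ico 1 k)] <;> push_cast <;> ring

lemma btilP_succ (c : ℤ) (E : ℕ → Bool) (k : ℕ) (hk : 1 ≤ k) :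
    btilP c E (k + 1) = btilP c E k + (if E k then 0 else 1) := by
  unfold btilP
  rw [Nat.Ico_succ_right_eq_insert_Ico hk, Finset.filter_insert]
  by_cases h : E k = true <;>
    simp [h, Finset.card_insert_of_notMem (by simp : k ∉ Finset.Ico 1 k)] <;> push_cast <;> ring

lemma lenP (c : ℤ) (E : ℕ → Bool) (k : ℕ) (hk : 1 ≤ k) :
    btilP c E k - atilP c E k + 1 = (k : ℤ) := by
  unfold atilP btilP
  have h1 : ((Finset.Ico 1 k).filter (fun m => E m = true)).card
      + ((Finset.Ico 1 k).filter (fun m => ¬ E m = true)).card = (Finset.Ico 1 k).card :=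
    Finset.card_filter_add_card_filter_not _
  have h2 : (Finset.Ico 1 k).filter (fun m => E m = false)
      = (Finset.Ico 1 k).filter (fun m => ¬ E m = true) := by
    apply Finset.filter_congr; intro m _; simp
  have h3 : (Finset.Ico 1 k).card = k - 1 := by simp
  rw [h2]
  push_cast [h3]
  omega

lemma boxP_spec {I : Type*} (i : ℤ → I) (c : ℤ) (E : ℕ → Bool) (k : ℕ) (hk : 1 ≤ k) :
    atilP c E k ≤ aP i c E k ∧ aP i c E k ≤ bP i c E k ∧ bP i c E k ≤ btilP c E k ∧
      i (aP i c E k) = i (bP i c E k) := by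
  have hab : atilP c E k ≤ btilP c E k := by have := lenP c E k hk; omega
  rcases eq_or_lt_of_le hk with h1 | h1
  · have h1 : k = 1 := h1.symm
    subst h1
    simp [aP, bP, atilP, btilP]
  · have hne : k ≠ 1 := by omega
    by_cases hE : E (k - 1) = true
    · have ha : aP i c E k = atilP c E k := by simp [aP, hne, hE]
      have hb : bP i c E k = obelow i (i (atilP c E k)) (btilP c E k) := by
        simp [bP, hne, hE]
      obtain ⟨h4, h5, h6⟩ := obelow_spec i hab (rfl : i (atilP c E k) = _)
      rw [ha, hb]
      exact ⟨le_refl _, h4, h5, h6.symm⟩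
    · have ha : aP i c E k = oabove i (i (btilP c E k)) (atilP c E k) := by
        simp [aP, hne, hE]
      have hb : bP i c E k = btilP c E k := by simp [bP, hne, hE]
      obtain ⟨h4, h5, h6⟩ := oabove_spec i hab (rfl : i (btilP c E k) = _)
      rw [ha, hb]
      exact ⟨h4, h5, le_refl _, h6⟩

lemma unionP {I : Type*} (i : ℤ → I) (c : ℤ) (E : ℕ → Bool) (s : ℕ) (hs : 1 ≤ s) :
    (⋃ k ∈ Set.Icc 1 s, Set.Icc (aP i c E k) (bP i c E k))
      = Set.Icc (atilP c E s) (btilP c E s) := by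
  induction s, hs using Nat.le_induction with
  | base =>
    have : Set.Icc (1 : ℕ) 1 = {1} := by ext x; simp
    rw [this]
    simp [aP, bP, atilP, btilP]
  | succ s hs ih =>
    have hIcc : Set.Icc (1 : ℕ) (s + 1) = insert (s + 1) (Set.Icc 1 s) := by
      ext x; simp; omega
    rw [hIcc, Set.biUnion_insert, ih]
    obtain ⟨h1, h2, h3, _⟩ := boxP_spec i c E (s + 1) (by omega)
    have hat := atilP_succ c E s hs
    have hbt := btilP_succ c E s hs
    have hlen := lenP c E s hs
    have hne : s + 1 ≠ 1 := by omega
    have hk1 : s + 1 - 1 = s := by omega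
    by_cases hE : E s = true
    · have ha : aP i c E (s + 1) = atilP c E (s + 1) := by simp [aP, hne, hk1, hE]; omega
      simp only [hE, if_true] at hat hbt
      ext x
      simp only [Set.mem_union, Set.mem_Icc]
      omega
    · have hb : bP i c E (s + 1) = btilP c E (s + 1) := by simp [bP, hne, hk1, hE]; omega
      simp only [eq_false_of_ne_true hE, Bool.false_eq_true, if_false] at hat hbt
      ext x
      simp only [Set.mem_union, Set.mem_Icc]
      omega

/-- The recursively defined sequence of intervals attached to a root
`c` and a sequence of expansion operators `E` is a chain of `i`-boxes: each box is an
`i`-box, each partial union is an interval of length `k`, and each box is the largest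
`i`-box of its color contained in the partial union. -/
theorem pair_gives_chain {I : Type*} (i : ℤ → I) (hocc : OccAll i)
    (c : ℤ) (E : ℕ → Bool) (l : ℕ) (hl : 1 ≤ l) :
    IsIBoxChain i l (aP i c E) (bP i c E) (atilP c E) (btilP c E) := by
  constructor
  · intro k hk _
    obtain ⟨_, h2, _, h4⟩ := boxP_spec i c E k hk
    exact ⟨h2, h4⟩
  · intro s hs _
    exact unionP i c E s hs
  · intro s hs _
    exact lenP c E s hs
  · intro s hs _ t ht1 ht2 hcol
    have hab : atilP c E s ≤ btilP c E s := by have := lenP c E s hs; omega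
    rcases eq_or_lt_of_le hs with h1 | h1
    · have h1 : s = 1 := h1.symm
      subst h1
      have h2 : atilP c E 1 = c := by simp [atilP]
      have h3 : btilP c E 1 = c := by simp [btilP]
      rw [h2] at ht1
      rw [h3] at ht2
      have : t = c := by omega
      simp [aP, bP, this]
    · have hne : s ≠ 1 := by omega
      obtain ⟨hA, _, hB, hiab⟩ := boxP_spec i c E s (by omega)
      by_cases hE : E (s - 1) = true
      · have ha : aP i c E s = atilP c E s := by simp [aP, hne, hE]
        have hb : bP i c E s = obelow i (i (atilP c E s)) (btilP c E s) := by
          simp [bP, hne, hE]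
        refine ⟨ha ▸ ht1, ?_⟩
        rw [hb]
        have hbdd : BddAbove {u : ℤ | u ≤ btilP c E s ∧ i u = i (atilP c E s)} :=
          ⟨btilP c E s, fun u hu => hu.1⟩
        exact le_csSup hbdd ⟨ht2, by rw [hcol, ha]⟩
      · have ha : aP i c E s = oabove i (i (btilP c E s)) (atilP c E s) := by
          simp [aP, hne, hE]
        have hb : bP i c E s = btilP c E s := by simp [bP, hne, hE]
        refine ⟨?_, hb ▸ ht2⟩
        rw [ha]
        have hbdd : BddBelow {u : ℤ | atilP c E s ≤ u ∧ i u = i (btilP c E s)} :=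
          ⟨atilP c E s, fun u hu => hu.1⟩
        exact csInf_le hbdd ⟨ht1, by rw [hcol, hiab, hb]⟩
end

section
/- The map sending a pair (c, (E_k)_{1 ≤ k < l}) with c ∈ Z and E_k ∈ {L, R} to the chain of i-boxes constructed recursively by 𝔠_1 = {c}, 𝔠_k = [ã_{k-1}-1, b̃_{k-1}} if E_{k-1} = L and 𝔠_k = {ã_{k-1}, b̃_{k-1}+1] if E_{k-1} = R, is a bijection onto the set of chains of i-boxes of length l. -/
open Classical

/-! ### Auxiliary lemmas -/

section XAux
variable {I : Type*} (i : ℤ → I)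

variable {I : Type*} (i : ℤ → I)

lemma xobelow_mem (hocc : OccAll i) (t0 y : ℤ) :
    obelow i (i t0) y ≤ y ∧ i (obelow i (i t0) y) = i t0 := by
  have hne : {t : ℤ | t ≤ y ∧ i t = i t0}.Nonempty := by
    obtain ⟨s, hs1, hs2⟩ := (hocc t0 y).1
    exact ⟨s, hs1, hs2⟩
  exact Int.csSup_mem hne ⟨y, fun t ht => ht.1⟩

lemma xle_obelow (t0 y t : ℤ) (ht : t ≤ y) (hit : i t = i t0) :
    t ≤ obelow i (i t0) y :=
  le_csSup ⟨y, fun u hu => hu.1⟩ ⟨ht, hit⟩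

lemma xoabove_mem (hocc : OccAll i) (t0 x : ℤ) :
    x ≤ oabove i (i t0) x ∧ i (oabove i (i t0) x) = i t0 := by
  have hne : {t : ℤ | x ≤ t ∧ i t = i t0}.Nonempty := by
    obtain ⟨s, hs1, hs2⟩ := (hocc t0 x).2
    exact ⟨s, hs1, hs2⟩
  exact Int.csInf_mem hne ⟨x, fun t ht => ht.1⟩

lemma xoabove_le (t0 x t : ℤ) (ht : x ≤ t) (hit : i t = i t0) :
    oabove i (i t0) x ≤ t :=
  csInf_le ⟨x, fun u hu => hu.1⟩ ⟨ht, hit⟩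


end XAux

lemma xatilP_one (c : ℤ) (E : ℕ → Bool) : atilP c E 1 = c := by simp [atilP]
lemma xbtilP_one (c : ℤ) (E : ℕ → Bool) : btilP c E 1 = c := by simp [btilP]

lemma xIco_succ_insert (k : ℕ) (hk : 1 ≤ k) :
    Finset.Ico 1 (k+1) = insert k (Finset.Ico 1 k) := by
  ext x; simp only [Finset.mem_Ico, Finset.mem_insert]; omega

lemma xatilP_succ (c : ℤ) (E : ℕ → Bool) (k : ℕ) (hk : 1 ≤ k) :
    atilP c E (k+1) = atilP c E k - (if E k = true then 1 else 0) := by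
  unfold atilP
  rw [xIco_succ_insert k hk, Finset.filter_insert]
  by_cases h : E k = true
  · rw [if_pos h, Finset.card_insert_of_notMem (by simp), if_pos h]
    push_cast; ring
  · rw [if_neg h, if_neg h]; ring

lemma xbtilP_succ (c : ℤ) (E : ℕ → Bool) (k : ℕ) (hk : 1 ≤ k) :
    btilP c E (k+1) = btilP c E k + (if E k = true then 0 else 1) := by
  unfold btilP
  rw [xIco_succ_insert k hk, Finset.filter_insert]
  by_cases h : E k = true
  · rw [if_neg (by simp [h]), if_pos h]; ring
  · rw [if_pos (by simp at h ⊢; exact h), if_neg h,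
      Finset.card_insert_of_notMem (by simp)]
    push_cast; ring

lemma xlenP (c : ℤ) (E : ℕ → Bool) (k : ℕ) (hk : 1 ≤ k) :
    btilP c E k - atilP c E k = (k : ℤ) - 1 := by
  unfold atilP btilP
  have h := Finset.card_filter_add_card_filter_not
    (s := Finset.Ico 1 k) (p := fun m => E m = true)
  simp only [Bool.not_eq_true] at h
  simp only [Nat.card_Ico] at h
  omega

lemma xatilP_anti (c : ℤ) (E : ℕ → Bool) {k k' : ℕ} (h : k ≤ k') :
    atilP c E k' ≤ atilP c E k := by
  unfold atilP
  have : ((Finset.Ico 1 k).filter (fun m => E m = true)).card ≤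
      ((Finset.Ico 1 k').filter (fun m => E m = true)).card :=
    Finset.card_le_card (Finset.filter_subset_filter _ (Finset.Ico_subset_Ico le_rfl h))
  omega

lemma xbtilP_mono (c : ℤ) (E : ℕ → Bool) {k k' : ℕ} (h : k ≤ k') :
    btilP c E k ≤ btilP c E k' := by
  unfold btilP
  have : ((Finset.Ico 1 k).filter (fun m => E m = false)).card ≤
      ((Finset.Ico 1 k').filter (fun m => E m = false)).card :=
    Finset.card_le_card (Finset.filter_subset_filter _ (Finset.Ico_subset_Ico le_rfl h))
  omega


section XBox
variable {I : Type*} (i : ℤ → I)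

lemma xaP_succ (c : ℤ) (E : ℕ → Bool) (m : ℕ) (hm : 1 ≤ m) :
    aP i c E (m+1) = if E m = true then atilP c E (m+1)
      else oabove i (i (btilP c E (m+1))) (atilP c E (m+1)) := by
  have h1 : m + 1 ≠ 1 := by omega
  simp only [aP, if_neg h1, Nat.add_sub_cancel]

lemma xbP_succ (c : ℤ) (E : ℕ → Bool) (m : ℕ) (hm : 1 ≤ m) :
    bP i c E (m+1) = if E m = true then obelow i (i (atilP c E (m+1))) (btilP c E (m+1))
      else btilP c E (m+1) := by
  have h1 : m + 1 ≠ 1 := by omega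
  simp only [bP, if_neg h1, Nat.add_sub_cancel]

lemma xaP_one (c : ℤ) (E : ℕ → Bool) : aP i c E 1 = c := by simp [aP]
lemma xbP_one (c : ℤ) (E : ℕ → Bool) : bP i c E 1 = c := by simp [bP]

/-- The k-th box of the pair-chain sits inside the k-th partial union, is nonempty,
and is an i-box. -/
lemma xboxP_spec (hocc : OccAll i) (c : ℤ) (E : ℕ → Bool) (k : ℕ) (hk : 1 ≤ k) :
    atilP c E k ≤ aP i c E k ∧ aP i c E k ≤ bP i c E k ∧
    bP i c E k ≤ btilP c E k ∧ i (aP i c E k) = i (bP i c E k) := by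
  rcases eq_or_lt_of_le hk with rfl | hk2
  · simp [xaP_one, xbP_one, xatilP_one, xbtilP_one]
  · obtain ⟨m, hm, rfl⟩ : ∃ m, 1 ≤ m ∧ k = m + 1 := ⟨k - 1, by omega, by omega⟩
    have hab : atilP c E (m+1) ≤ btilP c E (m+1) := by
      have := xlenP c E (m+1) (by omega); omega
    rw [xaP_succ i c E m hm, xbP_succ i c E m hm]
    by_cases hE : E m = true
    · rw [if_pos hE, if_pos hE]
      obtain ⟨h1, h2⟩ := xobelow_mem i hocc (atilP c E (m+1)) (btilP c E (m+1))
      exact ⟨le_rfl, xle_obelow i _ _ _ hab rfl, h1, h2.symm⟩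
    · rw [if_neg hE, if_neg hE]
      obtain ⟨h1, h2⟩ := xoabove_mem i hocc (btilP c E (m+1)) (atilP c E (m+1))
      exact ⟨h1, xoabove_le i _ _ _ hab rfl, le_rfl, h2⟩

/-- Coverage: the s-th partial union interval is covered by the boxes. -/
lemma xcover (hocc : OccAll i) (c : ℤ) (E : ℕ → Bool) :
    ∀ s, 1 ≤ s → Set.Icc (atilP c E s) (btilP c E s) ⊆
      ⋃ k ∈ Set.Icc 1 s, Set.Icc (aP i c E k) (bP i c E k) := by
  intro s hs
  induction s, hs using Nat.le_induction with
  | base =>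
    intro x hx
    refine Set.mem_biUnion (Set.mem_Icc.mpr ⟨le_rfl, le_rfl⟩) ?_
    simpa [xaP_one, xbP_one, xatilP_one, xbtilP_one] using hx
  | succ n hn IH =>
    intro x hx
    rw [Set.mem_Icc] at hx
    have hstepA := xatilP_succ c E n hn
    have hstepB := xbtilP_succ c E n hn
    have hspec := xboxP_spec i hocc c E (n+1) (by omega)
    by_cases hE : E n = true
    · rw [if_pos hE] at hstepA hstepB
      by_cases hxa : x = atilP c E (n+1)
      · refine Set.mem_biUnion (Set.mem_Icc.mpr ⟨(by omega : 1 ≤ n+1), le_rfl⟩) ?_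
        have hApE : aP i c E (n+1) = atilP c E (n+1) := by
          rw [xaP_succ i c E n hn, if_pos hE]
        have h5 := hspec.2.1
        exact Set.mem_Icc.mpr ⟨by omega, by omega⟩
      · have : x ∈ ⋃ k ∈ Set.Icc 1 n, Set.Icc (aP i c E k) (bP i c E k) :=
          IH (Set.mem_Icc.mpr ⟨by omega, by omega⟩)
        exact Set.biUnion_subset_biUnion_left
          (Set.Icc_subset_Icc le_rfl (by omega : n ≤ n+1)) this
    · rw [if_neg hE] at hstepA hstepB
      by_cases hxb : x = btilP c E (n+1)
      · refine Set.mem_biUnion (Set.mem_Icc.mpr ⟨(by omega : 1 ≤ n+1), le_rfl⟩) ?_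
        have hBpE : bP i c E (n+1) = btilP c E (n+1) := by
          rw [xbP_succ i c E n hn, if_neg hE]
        have h5 := hspec.2.1
        exact Set.mem_Icc.mpr ⟨by omega, by omega⟩
      · have : x ∈ ⋃ k ∈ Set.Icc 1 n, Set.Icc (aP i c E k) (bP i c E k) :=
          IH (Set.mem_Icc.mpr ⟨by omega, by omega⟩)
        exact Set.biUnion_subset_biUnion_left
          (Set.Icc_subset_Icc le_rfl (by omega : n ≤ n+1)) this

/-- Forward direction: every pair gives a chain of i-boxes. -/
lemma xforward (hocc : OccAll i) (l : ℕ) (c : ℤ) (E : ℕ → Bool) :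
    IsIBoxChain i l (aP i c E) (bP i c E) (atilP c E) (btilP c E) := by
  constructor
  · intro k hk _
    obtain ⟨_, h2, _, h4⟩ := xboxP_spec i hocc c E k hk
    exact ⟨h2, h4⟩
  · intro s hs _
    apply Set.Subset.antisymm
    · intro x hx
      simp only [Set.mem_iUnion, Set.mem_Icc, exists_prop] at hx
      obtain ⟨k, ⟨hk1, hks⟩, hx1, hx2⟩ := hx
      obtain ⟨h1, _, h3, _⟩ := xboxP_spec i hocc c E k hk1
      exact Set.mem_Icc.mpr ⟨le_trans (le_trans (xatilP_anti c E hks) h1) hx1,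
        le_trans hx2 (le_trans h3 (xbtilP_mono c E hks))⟩
    · exact xcover i hocc c E s hs
  · intro s hs _
    have := xlenP c E s hs; omega
  · intro s hs _ t h1 h2 h3
    rcases eq_or_lt_of_le hs with rfl | hs2
    · rw [xatilP_one] at h1
      rw [xbtilP_one] at h2
      have : t = c := le_antisymm h2 h1
      rw [this, xaP_one, xbP_one]
      exact ⟨le_rfl, le_rfl⟩
    · obtain ⟨m, hm, rfl⟩ : ∃ m, 1 ≤ m ∧ s = m + 1 := ⟨s - 1, by omega, by omega⟩
      rw [xaP_succ i c E m hm] at h3 ⊢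
      rw [xbP_succ i c E m hm]
      by_cases hE : E m = true
      · simp only [if_pos hE] at h3 ⊢
        exact ⟨h1, xle_obelow i _ _ _ h2 h3⟩
      · simp only [if_neg hE] at h3 ⊢
        have h4 := (xoabove_mem i hocc (btilP c E (m+1)) (atilP c E (m+1))).2
        exact ⟨xoabove_le i _ _ _ h1 (h3.trans h4), h2⟩

end XBox

section XChain
variable {I : Type*} {i : ℤ → I} {l : ℕ} {a b atil btil : ℕ → ℤ}

lemma xchain_one (H : IsIBoxChain i l a b atil btil) (hl : 1 ≤ l) :
    a 1 = atil 1 ∧ b 1 = btil 1 ∧ btil 1 = atil 1 := by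
  have h1 := H.union_eq 1 le_rfl hl
  have h2 := H.union_len 1 le_rfl hl
  have hb : btil 1 = atil 1 := by omega
  have hab := (H.ibox 1 le_rfl hl).1
  simp only [Set.Icc_self, Set.mem_singleton_iff, Set.iUnion_iUnion_eq_left] at h1
  have ha : a 1 ∈ Set.Icc (atil 1) (btil 1) := h1 ▸ Set.mem_Icc.mpr ⟨le_rfl, hab⟩
  have hbm : b 1 ∈ Set.Icc (atil 1) (btil 1) := h1 ▸ Set.mem_Icc.mpr ⟨hab, le_rfl⟩
  rw [Set.mem_Icc] at ha hbm
  refine ⟨by omega, by omega, hb⟩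

lemma xchain_box_sub (H : IsIBoxChain i l a b atil btil) (k : ℕ)
    (hk1 : 1 ≤ k) (hkl : k ≤ l) : atil k ≤ a k ∧ b k ≤ btil k := by
  have h1 := H.union_eq k hk1 hkl
  have hab := (H.ibox k hk1 hkl).1
  have ha : a k ∈ Set.Icc (atil k) (btil k) := by
    rw [← h1]
    exact Set.mem_biUnion (Set.mem_Icc.mpr ⟨hk1, le_rfl⟩) (Set.mem_Icc.mpr ⟨le_rfl, hab⟩)
  have hb : b k ∈ Set.Icc (atil k) (btil k) := by
    rw [← h1]
    exact Set.mem_biUnion (Set.mem_Icc.mpr ⟨hk1, le_rfl⟩) (Set.mem_Icc.mpr ⟨hab, le_rfl⟩)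
  rw [Set.mem_Icc] at ha hb
  exact ⟨ha.1, hb.2⟩

lemma xchain_step (H : IsIBoxChain i l a b atil btil) (s : ℕ)
    (hs1 : 1 ≤ s) (hsl : s < l) :
    (atil (s+1) = atil s - 1 ∧ btil (s+1) = btil s) ∨
    (atil (s+1) = atil s ∧ btil (s+1) = btil s + 1) := by
  have hsub : Set.Icc (atil s) (btil s) ⊆ Set.Icc (atil (s+1)) (btil (s+1)) := by
    rw [← H.union_eq s hs1 (by omega), ← H.union_eq (s+1) (by omega) (by omega)]
    exact Set.biUnion_subset_biUnion_left (Set.Icc_subset_Icc le_rfl (by omega))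
  have hlen_s := H.union_len s hs1 (by omega)
  have hlen_s1 := H.union_len (s+1) (by omega) (by omega)
  have h1 := Set.mem_Icc.mp (hsub (Set.mem_Icc.mpr ⟨le_rfl, by omega⟩))
  have h2 := Set.mem_Icc.mp (hsub (Set.mem_Icc.mpr ⟨by omega, le_rfl⟩))
  omega

lemma xchain_new (H : IsIBoxChain i l a b atil btil) (s : ℕ)
    (hs1 : 1 ≤ s) (hsl : s < l) (x : ℤ) (hx : atil (s+1) ≤ x) (hx2 : x ≤ btil (s+1))
    (hnot : ¬ (atil s ≤ x ∧ x ≤ btil s)) : a (s+1) ≤ x ∧ x ≤ b (s+1) := by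
  have h1 := H.union_eq (s+1) (by omega) (by omega)
  have hmem : x ∈ ⋃ k ∈ Set.Icc 1 (s+1), Set.Icc (a k) (b k) := by
    rw [h1]; exact Set.mem_Icc.mpr ⟨hx, hx2⟩
  simp only [Set.mem_iUnion, Set.mem_Icc, exists_prop] at hmem
  obtain ⟨k, ⟨hk1, hk2⟩, hxk⟩ := hmem
  rcases eq_or_lt_of_le hk2 with rfl | hk3
  · exact hxk
  · exfalso
    apply hnot
    have : x ∈ Set.Icc (atil s) (btil s) := by
      rw [← H.union_eq s hs1 (by omega)]
      exact Set.mem_biUnion (Set.mem_Icc.mpr ⟨hk1, by omega⟩) (Set.mem_Icc.mpr hxk)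
    exact Set.mem_Icc.mp this

/-- For any data `(c', E')` matching the steps of the chain, the partial unions agree. -/
lemma xrealize_til (H : IsIBoxChain i l a b atil btil) (hl : 1 ≤ l)
    (c' : ℤ) (E' : ℕ → Bool) (hc' : c' = atil 1)
    (hE' : ∀ m, 1 ≤ m → m < l → (E' m = true ↔ atil (m+1) = atil m - 1)) :
    ∀ k, 1 ≤ k → k ≤ l → atilP c' E' k = atil k ∧ btilP c' E' k = btil k := by
  intro k hk1
  induction k, hk1 using Nat.le_induction with
  | base =>
    intro _
    obtain ⟨_, _, h3⟩ := xchain_one H hl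
    rw [xatilP_one, xbtilP_one]
    exact ⟨hc', by omega⟩
  | succ n hn IH =>
    intro hnl
    obtain ⟨ih1, ih2⟩ := IH (by omega)
    have hA := xatilP_succ c' E' n hn
    have hB := xbtilP_succ c' E' n hn
    rcases xchain_step H n hn (by omega) with ⟨h1, h2⟩ | ⟨h1, h2⟩
    · have hE : E' n = true := (hE' n hn (by omega)).mpr h1
      rw [if_pos hE] at hA hB
      omega
    · have hE : ¬ (E' n = true) := by
        rw [hE' n hn (by omega)]; omega
      rw [if_neg hE] at hA hB
      omega

/-- Realization: the data `(c', E')` reconstructs the boxes of the chain. -/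
lemma xrealize (hocc : OccAll i) (H : IsIBoxChain i l a b atil btil) (hl : 1 ≤ l)
    (c' : ℤ) (E' : ℕ → Bool) (hc' : c' = atil 1)
    (hE' : ∀ m, 1 ≤ m → m < l → (E' m = true ↔ atil (m+1) = atil m - 1)) :
    ∀ k, 1 ≤ k → k ≤ l → aP i c' E' k = a k ∧ bP i c' E' k = b k := by
  have htil := xrealize_til H hl c' E' hc' hE'
  intro k hk1 hkl
  rcases eq_or_lt_of_le hk1 with rfl | hklt
  · obtain ⟨h1, h2, h3⟩ := xchain_one H hl
    rw [xaP_one, xbP_one, hc']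
    exact ⟨by omega, by omega⟩
  · obtain ⟨m, hm, rfl⟩ : ∃ m, 1 ≤ m ∧ k = m + 1 := ⟨k - 1, by omega, by omega⟩
    have hml : m < l := by omega
    obtain ⟨hta, htb⟩ := htil (m+1) (by omega) hkl
    obtain ⟨hta', htb'⟩ := htil m (by omega) (by omega)
    have hlen1 := H.union_len (m+1) (by omega) hkl
    have hbox := xchain_box_sub H (m+1) (by omega) hkl
    have hib := H.ibox (m+1) (by omega) hkl
    rw [xaP_succ i c' E' m hm, xbP_succ i c' E' m hm, hta, htb]
    rcases xchain_step H m hm hml with ⟨h1, h2⟩ | ⟨h1, h2⟩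
    · have hE : E' m = true := (hE' m hm hml).mpr h1
      rw [if_pos hE, if_pos hE]
      have hnew := xchain_new H m hm hml (atil (m+1)) le_rfl (by omega) (by omega)
      have ha : a (m+1) = atil (m+1) := by omega
      constructor
      · omega
      · -- b (m+1) = obelow of color i (atil (m+1)) below btil (m+1)
        have hcol : i (a (m+1)) = i (atil (m+1)) := by rw [ha]
        have hub : b (m+1) ≤ obelow i (i (atil (m+1))) (btil (m+1)) :=
          xle_obelow i _ _ _ hbox.2 (hib.2.symm.trans hcol)
        obtain ⟨ho1, ho2⟩ := xobelow_mem i hocc (atil (m+1)) (btil (m+1))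
        have hlb : atil (m+1) ≤ obelow i (i (atil (m+1))) (btil (m+1)) := by
          have := xle_obelow i (atil (m+1)) (btil (m+1)) (a (m+1))
            (le_trans hib.1 hbox.2) hcol
          omega
        have := H.largest (m+1) (by omega) hkl _ hlb ho1 (ho2.trans hcol.symm)
        omega
    · have hE : ¬ (E' m = true) := by rw [hE' m hm hml]; omega
      rw [if_neg hE, if_neg hE]
      have hnew := xchain_new H m hm hml (btil (m+1)) (by omega) le_rfl (by omega)
      have hb : b (m+1) = btil (m+1) := by omega
      constructor
      · -- a (m+1) = oabove of color i (btil (m+1)) above atil (m+1)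
        have hcol : i (b (m+1)) = i (btil (m+1)) := by rw [hb]
        have hlb : oabove i (i (btil (m+1))) (atil (m+1)) ≤ a (m+1) :=
          xoabove_le i _ _ _ hbox.1 (hib.2.trans hcol)
        obtain ⟨ho1, ho2⟩ := xoabove_mem i hocc (btil (m+1)) (atil (m+1))
        have hub : oabove i (i (btil (m+1))) (atil (m+1)) ≤ btil (m+1) := by
          have := xoabove_le i (btil (m+1)) (atil (m+1)) (b (m+1))
            (le_trans hbox.1 hib.1) hcol
          omega
        have := H.largest (m+1) (by omega) hkl _ ho1 hub
          (ho2.trans (hcol.symm.trans hib.2.symm))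
        omega
      · omega

/-- Uniqueness: any data matching the boxes has the prescribed root and steps. -/
lemma xunique (H : IsIBoxChain i l a b atil btil) (hl : 1 ≤ l)
    (c' : ℤ) (E' : ℕ → Bool)
    (hmatch : ∀ k, 1 ≤ k → k ≤ l → aP i c' E' k = a k ∧ bP i c' E' k = b k) :
    c' = atil 1 ∧ ∀ m, 1 ≤ m → m < l → (E' m = true ↔ atil (m+1) = atil m - 1) := by
  have hc' : c' = atil 1 := by
    have h := (hmatch 1 le_rfl hl).1
    rw [xaP_one] at h
    rw [h, (xchain_one H hl).1]
  have htil : ∀ k, 1 ≤ k → k ≤ l → atilP c' E' k = atil k ∧ btilP c' E' k = btil k := by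
    intro k hk1
    induction k, hk1 using Nat.le_induction with
    | base =>
      intro _
      obtain ⟨_, _, h3⟩ := xchain_one H hl
      rw [xatilP_one, xbtilP_one]
      exact ⟨hc', by omega⟩
    | succ n hn IH =>
      intro hnl
      obtain ⟨ih1, ih2⟩ := IH (by omega)
      have hA := xatilP_succ c' E' n hn
      have hB := xbtilP_succ c' E' n hn
      have hstep := xchain_step H n hn (by omega)
      have hbox := xchain_box_sub H (n+1) (by omega) hnl
      by_cases hE : E' n = true
      · have ha := (hmatch (n+1) (by omega) hnl).1
        rw [xaP_succ i c' E' n hn, if_pos hE] at ha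
        rw [if_pos hE] at hA hB
        omega
      · have hb := (hmatch (n+1) (by omega) hnl).2
        rw [xbP_succ i c' E' n hn, if_neg hE] at hb
        rw [if_neg hE] at hA hB
        omega
  refine ⟨hc', fun m hm1 hm2 => ?_⟩
  obtain ⟨h1, h2⟩ := htil m hm1 (by omega)
  obtain ⟨h3, h4⟩ := htil (m+1) (by omega) (by omega)
  have hA := xatilP_succ c' E' m hm1
  constructor
  · intro hE; rw [if_pos hE] at hA; omega
  · intro hX
    by_contra hE
    rw [if_neg hE] at hA
    omega

end XChain

/-- The map `(c, (E_k)) ↦ chain of i-boxes` is a bijection onto the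
set of chains of `i`-boxes of length `l`: every pair gives a chain, and every chain
comes from a pair which is unique (as a root together with the expansion operators on
the relevant range `[1, l-1]`). -/
theorem pair_chain_bijection {I : Type*} (i : ℤ → I) (hocc : OccAll i)
    (l : ℕ) (hl : 1 ≤ l) :
    (∀ c E, IsIBoxChain i l (aP i c E) (bP i c E) (atilP c E) (btilP c E)) ∧
    (∀ a b atil btil, IsIBoxChain i l a b atil btil →
      ∃ c E, (∀ k, 1 ≤ k → k ≤ l → aP i c E k = a k ∧ bP i c E k = b k) ∧
        (∀ c' E', (∀ k, 1 ≤ k → k ≤ l → aP i c' E' k = a k ∧ bP i c' E' k = b k) →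
          c' = c ∧ ∀ m, 1 ≤ m → m < l → E' m = E m)) := by
  refine ⟨fun c E => xforward i hocc l c E, ?_⟩
  intro a b atil btil H
  set E : ℕ → Bool := fun m => decide (atil (m+1) = atil m - 1) with hEdef
  have hE : ∀ m, 1 ≤ m → m < l → (E m = true ↔ atil (m+1) = atil m - 1) := by
    intro m _ _
    simp [hEdef]
  refine ⟨atil 1, E, xrealize hocc H hl (atil 1) E rfl hE, ?_⟩
  intro c' E' hmatch
  obtain ⟨hc', hiff⟩ := xunique H hl c' E' hmatch
  refine ⟨hc', fun m hm1 hm2 => ?_⟩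
  have h1 := (hiff m hm1 hm2).trans (hE m hm1 hm2).symm
  exact Bool.eq_iff_iff.mpr h1
end

section
/- Let 𝔠 = (𝔠_k)_{1 ≤ k ≤ l} be a chain of i-boxes with 𝔠_s = [a_s, b_s] and partial unions [ã_s, b̃_s]. Then for every s, one has b_s ≤ b̃_s < b_s^+ and a_s^- < ã_s ≤ a_s, where s^+ (resp. s^-) denotes the next (resp. previous) position in the sequence i with the same letter as position s, taken to be ±∞ if none exists. Moreover, [ã_s, b̃_s] ⊆ [ã_t, b̃_t] whenever s < t. -/
open Classical

/-- For a chain of `i`-boxes with boxes `[a_s, b_s]` and partial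
unions `[ã_s, b̃_s]`: `b_s ≤ b̃_s < b_s^+` and `a_s^- < ã_s ≤ a_s` (the comparisons
with `b_s^+` resp. `a_s^-` are expressed by quantifying over later resp. earlier
occurrences of the same letter), and partial unions are increasing. -/
theorem chain_union_bounds {I : Type*} (i : ℤ → I) (l : ℕ) (a b atil btil : ℕ → ℤ)
    (hchain : IsIBoxChain i l a b atil btil) (s : ℕ) (hs1 : 1 ≤ s) (hsl : s ≤ l) :
    (b s ≤ btil s ∧ ∀ t : ℤ, b s < t → i t = i (b s) → btil s < t) ∧
    (atil s ≤ a s ∧ ∀ t : ℤ, t < a s → i t = i (a s) → t < atil s) ∧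
    (∀ u, s ≤ u → u ≤ l → atil u ≤ atil s ∧ btil s ≤ btil u) := by
  obtain ⟨hab, hcol⟩ := hchain.ibox s hs1 hsl
  have hmem : ∀ x : ℤ, a s ≤ x → x ≤ b s → x ∈ Set.Icc (atil s) (btil s) := by
    intro x h1 h2
    rw [← hchain.union_eq s hs1 hsl]
    exact Set.mem_biUnion (Set.mem_Icc.2 ⟨hs1, le_refl s⟩) (Set.mem_Icc.2 ⟨h1, h2⟩)
  have hbmem := hmem (b s) hab le_rfl
  have hamem := hmem (a s) le_rfl hab
  refine ⟨⟨hbmem.2, ?_⟩, ⟨hamem.1, ?_⟩, ?_⟩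
  · intro t ht hit
    by_contra h
    push_neg at h
    have := (hchain.largest s hs1 hsl t (le_trans hbmem.1 (le_of_lt ht)) h
      (hit.trans hcol.symm)).2
    omega
  · intro t ht hit
    by_contra h
    push_neg at h
    have := (hchain.largest s hs1 hsl t h (le_trans (le_of_lt ht) hamem.2) hit).1
    omega
  · intro u hsu hul
    have hu1 : 1 ≤ u := le_trans hs1 hsu
    have hsub : Set.Icc (atil s) (btil s) ⊆ Set.Icc (atil u) (btil u) := by
      rw [← hchain.union_eq s hs1 hsl, ← hchain.union_eq u hu1 hul]
      exact Set.iUnion₂_subset fun k hk =>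
        Set.subset_biUnion_of_mem (u := fun k => Set.Icc (a k) (b k))
          (Set.mem_Icc.2 ⟨(Set.mem_Icc.1 hk).1, le_trans (Set.mem_Icc.1 hk).2 hsu⟩)
    have hlen := hchain.union_len s hs1 hsl
    have hle : atil s ≤ btil s := by omega
    have h1 := hsub (Set.mem_Icc.2 ⟨le_rfl, hle⟩)
    have h2 := hsub (Set.mem_Icc.2 ⟨hle, le_rfl⟩)
    exact ⟨h1.1, h2.2⟩
end

section
/- Let 𝔠 and 𝔠' be chains of i-boxes related by a box move at position s. If s ≥ 2, then i(𝔠'_s) = i(𝔠_{s+1}), i(𝔠'_{s+1}) = i(𝔠_s), and i(𝔠'_k) = i(𝔠_k) for all k ∉ {s, s+1}. If s = 1, then i(𝔠'_1) = i(𝔠_2), i(𝔠'_2) = i(𝔠_1), and i(𝔠'_k) = i(𝔠_k) for all k ≥ 3. -/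
open Classical

/-! ## Auxiliary lemmas for Statement 6 -/

/-- The number of `L`'s (`true`s) among `E 1, …, E (k-1)`, as an integer. -/
def Fc (E : ℕ → Bool) (k : ℕ) : ℤ := ((Finset.Ico 1 k).filter (fun m => E m = true)).card

lemma Fc_congr (E E' : ℕ → Bool) (k : ℕ) (h : ∀ m, 1 ≤ m → m < k → E m = E' m) :
    Fc E k = Fc E' k := by
  unfold Fc
  have heq : Finset.filter (fun m => E m = true) (Finset.Ico 1 k)
      = Finset.filter (fun m => E' m = true) (Finset.Ico 1 k) := by
    apply Finset.filter_congr
    intro m hm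
    rw [Finset.mem_Ico] at hm
    rw [h m hm.1 hm.2]
  rw [heq]

lemma Fc_succ (E : ℕ → Bool) (k : ℕ) (hk : 1 ≤ k) :
    Fc E (k+1) = Fc E k + (if E k then 1 else 0) := by
  unfold Fc
  rw [Nat.Ico_succ_right_eq_insert_Ico hk, Finset.filter_insert]
  by_cases h : E k <;> simp [h, Finset.card_insert_of_notMem]

lemma Fc_diff (E E' : ℕ → Bool) (k0 : ℕ) (hk0 : 1 ≤ k0)
    (h : ∀ m, k0 ≤ m → E m = E' m) :
    ∀ k, k0 ≤ k → Fc E k - Fc E k0 = Fc E' k - Fc E' k0 := by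
  intro k hk
  induction k, hk using Nat.le_induction with
  | base => ring
  | succ n hn ih =>
    rw [Fc_succ E n (by omega), Fc_succ E' n (by omega), h n hn]
    omega

lemma atilP_Fc (c : ℤ) (E : ℕ → Bool) (k : ℕ) : atilP c E k = c - Fc E k := rfl

lemma btilP_Fc (c : ℤ) (E : ℕ → Bool) (k : ℕ) (hk : 1 ≤ k) :
    btilP c E k = c + (k:ℤ) - 1 - Fc E k := by
  unfold btilP Fc
  have := Finset.card_filter_add_card_filter_not
    (s := Finset.Ico 1 k) (p := fun m => E m = true)
  simp only [Nat.card_Ico, Bool.not_eq_true] at this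
  have h2 : (((Finset.Ico 1 k).filter (fun m => E m = true)).card : ℤ)
      + ((Finset.Ico 1 k).filter (fun m => E m = false)).card = (k : ℤ) - 1 := by
    have := congrArg (Nat.cast : ℕ → ℤ) this
    push_cast at this ⊢
    omega
  omega

lemma i_oabove {I : Type*} (i : ℤ → I) (hocc : OccAll i) (t x : ℤ) :
    i (oabove i (i t) x) = i t := by
  have hne : Set.Nonempty {s : ℤ | x ≤ s ∧ i s = i t} := (hocc t x).2
  have hbdd : BddBelow {s : ℤ | x ≤ s ∧ i s = i t} := ⟨x, fun y hy => hy.1⟩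
  exact (Int.csInf_mem hne hbdd).2

lemma colorP_one {I : Type*} (i : ℤ → I) (c : ℤ) (E : ℕ → Bool) :
    colorP i c E 1 = i c := by
  unfold colorP aP
  simp

lemma colorP_two {I : Type*} (i : ℤ → I) (hocc : OccAll i) (c : ℤ) (E : ℕ → Bool)
    (k : ℕ) (hk : 2 ≤ k) :
    colorP i c E k = if E (k-1) then i (atilP c E k) else i (btilP c E k) := by
  unfold colorP aP
  rw [if_neg (by omega)]
  by_cases h : E (k-1)
  · simp [h]
  · simp only [h, if_false, Bool.false_eq_true]
    exact i_oabove i hocc _ _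

/-- Colors under a box move: if `𝔠` and `𝔠' = ν_s 𝔠` are related by a
box move at position `s`, then for `s ≥ 2`: `i(𝔠'_s) = i(𝔠_{s+1})`,
`i(𝔠'_{s+1}) = i(𝔠_s)` and all other colors agree; for `s = 1`: `i(𝔠'_1) = i(𝔠_2)`,
`i(𝔠'_2) = i(𝔠_1)` and the colors agree for `k ≥ 3`. -/
theorem box_move_colors {I : Type*} (i : ℤ → I) (hocc : OccAll i)
    (l : ℕ) (p : ℤ × (ℕ → Bool)) (s : ℕ) (hmov : Movable l s p) :
    (2 ≤ s →
      colorP i (nuMove s p).1 (nuMove s p).2 s = colorP i p.1 p.2 (s + 1) ∧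
      colorP i (nuMove s p).1 (nuMove s p).2 (s + 1) = colorP i p.1 p.2 s ∧
      ∀ k, 1 ≤ k → k ≤ l → k ≠ s → k ≠ s + 1 →
        colorP i (nuMove s p).1 (nuMove s p).2 k = colorP i p.1 p.2 k) ∧
    (s = 1 →
      colorP i (nuMove s p).1 (nuMove s p).2 1 = colorP i p.1 p.2 2 ∧
      colorP i (nuMove s p).1 (nuMove s p).2 2 = colorP i p.1 p.2 1 ∧
      ∀ k, 3 ≤ k → k ≤ l →
        colorP i (nuMove s p).1 (nuMove s p).2 k = colorP i p.1 p.2 k) := by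
  obtain ⟨c, E⟩ := p
  obtain ⟨hs1, hsl, hor⟩ := hmov
  constructor
  · -- case `2 ≤ s`
    intro h2
    have hne : E (s-1) ≠ E s := by
      rcases hor with rfl | ⟨_, h⟩
      · omega
      · exact h
    set E' : ℕ → Bool := fun k => if k = s - 1 ∨ k = s then !(E k) else E k with hE'def
    have hmove : nuMove s (c, E) = (c, E') := by
      simp [nuMove, show s ≠ 1 by omega, hE'def]
    simp only [hmove]
    -- basic facts about `E'`
    have hE's1 : E' (s-1) = E s := by
      have : E' (s-1) = !(E (s-1)) := if_pos (Or.inl rfl)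
      rw [this]
      revert hne; cases E (s-1) <;> cases E s <;> simp
    have hE's : E' s = E (s-1) := by
      have : E' s = !(E s) := if_pos (Or.inr rfl)
      rw [this]
      revert hne; cases E (s-1) <;> cases E s <;> simp
    have hE'k : ∀ m, m ≠ s - 1 → m ≠ s → E' m = E m := by
      intro m h1 h2
      exact if_neg (by tauto)
    -- facts about `Fc`
    have hs1' : (1:ℕ) ≤ s - 1 := by omega
    have hss : s - 1 + 1 = s := by omega
    have hF0 : Fc E' (s-1) = Fc E (s-1) := by
      apply Fc_congr
      intro m hm1 hm2
      rw [hE'k m (by omega) (by omega)]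
    have hFsE : Fc E s = Fc E (s-1) + (if E (s-1) then 1 else 0) := by
      rw [← hss]; exact Fc_succ _ _ hs1'
    have hFsE' : Fc E' s = Fc E (s-1) + (if E s then 1 else 0) := by
      rw [← hss, Fc_succ _ _ hs1', hF0, hss, hE's1]
    have hFs1E : Fc E (s+1) = Fc E s + (if E s then 1 else 0) :=
      Fc_succ _ _ (by omega)
    have hFs1E' : Fc E' (s+1) = Fc E' s + (if E (s-1) then 1 else 0) := by
      rw [Fc_succ _ _ (by omega : 1 ≤ s), hE's]
    have hFs1eq : Fc E' (s+1) = Fc E (s+1) := by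
      rw [hFs1E', hFsE', hFs1E, hFsE]; ring
    have hFge : ∀ k, s + 1 ≤ k → Fc E' k = Fc E k := by
      intro k hk
      have := Fc_diff E' E (s+1) (by omega)
        (fun m hm => hE'k m (by omega) (by omega)) k hk
      omega
    refine ⟨?_, ?_, ?_⟩
    · -- `i(𝔠'_s) = i(𝔠_{s+1})`
      rw [colorP_two i hocc c E' s h2, colorP_two i hocc c E (s+1) (by omega)]
      have hss1 : s + 1 - 1 = s := rfl
      rw [hss1, hE's1]
      cases hEs : E s with
      | true =>
        have hEs1 : E (s-1) = false := by
          revert hne; rw [hEs]; cases E (s-1) <;> simp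
        simp only [if_pos trivial, atilP_Fc, hFsE', hFs1E, hFsE, hEs, hEs1]
        norm_num
      | false =>
        have hEs1 : E (s-1) = true := by
          revert hne; rw [hEs]; cases E (s-1) <;> simp
        simp only [Bool.false_eq_true, if_false,
          btilP_Fc c E' s (by omega), btilP_Fc c E (s+1) (by omega),
          hFsE', hFs1E, hFsE, hEs, hEs1]
        norm_num
        congr 1
        push_cast
        ring
    · -- `i(𝔠'_{s+1}) = i(𝔠_s)`
      rw [colorP_two i hocc c E' (s+1) (by omega), colorP_two i hocc c E s h2]
      have hss1 : s + 1 - 1 = s := rfl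
      rw [hss1, hE's]
      cases hEs1 : E (s-1) with
      | true =>
        have hEs : E s = false := by
          revert hne; rw [hEs1]; cases E s <;> simp
        simp only [if_pos trivial, atilP_Fc, hFs1E', hFsE', hFsE, hEs, hEs1]
        norm_num
      | false =>
        have hEs : E s = true := by
          revert hne; rw [hEs1]; cases E s <;> simp
        simp only [Bool.false_eq_true, if_false,
          btilP_Fc c E' (s+1) (by omega), btilP_Fc c E s (by omega),
          hFs1E', hFsE', hFsE, hEs, hEs1]
        norm_num
        congr 1
        push_cast
        ring
    · -- all other colors agree
      intro k hk1 hkl hks hks1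
      rcases eq_or_lt_of_le hk1 with rfl | hk2
      · rw [colorP_one, colorP_one]
      have hk2' : 2 ≤ k := hk2
      have hFck : Fc E' k = Fc E k := by
        by_cases hk : k < s
        · apply Fc_congr
          intro m hm1 hm2
          exact hE'k m (by omega) (by omega)
        · exact hFge k (by omega)
      have hE'km : E' (k-1) = E (k-1) := hE'k _ (by omega) (by omega)
      rw [colorP_two i hocc c E' k hk2', colorP_two i hocc c E k hk2', hE'km]
      have hat : atilP c E' k = atilP c E k := by
        rw [atilP_Fc, atilP_Fc, hFck]
      have hbt : btilP c E' k = btilP c E k := by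
        rw [btilP_Fc c E' k (by omega), btilP_Fc c E k (by omega), hFck]
      rw [hat, hbt]
  · -- case `s = 1`
    intro hs
    subst hs
    set c' : ℤ := if E 1 then c - 1 else c + 1 with hc'def
    set E' : ℕ → Bool := fun k => if k = 0 ∨ k = 1 then !(E k) else E k with hE'def
    have hmove : nuMove 1 (c, E) = (c', E') := by
      simp [nuMove, hc'def, hE'def]
    simp only [hmove]
    have hE'1 : E' 1 = !(E 1) := if_pos (Or.inr rfl)
    have hE'k : ∀ m, 2 ≤ m → E' m = E m := by
      intro m hm
      exact if_neg (by omega)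
    have hF1 : ∀ G : ℕ → Bool, Fc G 1 = 0 := by
      intro G; simp [Fc]
    have hF2E : Fc E 2 = (if E 1 then 1 else 0) := by
      rw [show (2:ℕ) = 1 + 1 from rfl, Fc_succ _ _ le_rfl, hF1]; ring
    have hF2E' : Fc E' 2 = (if E 1 then 0 else 1) := by
      rw [show (2:ℕ) = 1 + 1 from rfl, Fc_succ _ _ le_rfl, hF1, hE'1]
      cases E 1 <;> norm_num
    have hkey : ∀ k, 2 ≤ k → c' - Fc E' k = c - Fc E k := by
      intro k hk
      have := Fc_diff E' E 2 (by omega) (fun m hm => hE'k m hm) k hk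
      rw [hF2E, hF2E'] at this
      rw [hc'def]
      split_ifs at this ⊢ <;> omega
    refine ⟨?_, ?_, ?_⟩
    · -- `i(𝔠'_1) = i(𝔠_2)`
      rw [colorP_one, colorP_two i hocc c E 2 le_rfl]
      cases hE1 : E 1 with
      | true =>
        have h2 : c' = c - 1 := by rw [hc'def, if_pos hE1]
        have h1 : atilP c E 2 = c - 1 := by rw [atilP_Fc, hF2E, if_pos hE1]
        rw [if_pos rfl, h2, h1]
      | false =>
        have h2 : c' = c + 1 := by rw [hc'def, if_neg (by simp [hE1])]
        have h1 : btilP c E 2 = c + 1 := by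
          rw [btilP_Fc c E 2 one_le_two, hF2E, if_neg (by simp [hE1])]
          omega
        rw [if_neg (by simp), h2, h1]
    · -- `i(𝔠'_2) = i(𝔠_1)`
      rw [colorP_two i hocc c' E' 2 le_rfl, colorP_one]
      cases hE1 : E 1 with
      | true =>
        have hE'1f : E' (2-1) = false := by
          rw [show (2:ℕ)-1 = 1 from rfl, hE'1, hE1]; rfl
        have h2 : c' = c - 1 := by rw [hc'def, if_pos hE1]
        have h1 : btilP c' E' 2 = c := by
          rw [btilP_Fc c' E' 2 one_le_two, hF2E', if_pos hE1, h2]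
          omega
        rw [if_neg (by simp [hE'1f]), h1]
      | false =>
        have hE'1t : E' (2-1) = true := by
          rw [show (2:ℕ)-1 = 1 from rfl, hE'1, hE1]; rfl
        have h2 : c' = c + 1 := by rw [hc'def, if_neg (by simp [hE1])]
        have h1 : atilP c' E' 2 = c := by
          rw [atilP_Fc, hF2E', if_neg (by simp [hE1]), h2]
          omega
        rw [if_pos hE'1t, h1]
    · -- colors agree for `k ≥ 3`
      intro k hk3 hkl
      have hk2 : 2 ≤ k := by omega
      have hE'km : E' (k-1) = E (k-1) := hE'k _ (by omega)
      rw [colorP_two i hocc c' E' k hk2, colorP_two i hocc c E k hk2, hE'km]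
      have hkk := hkey k hk2
      have hat : atilP c' E' k = atilP c E k := by
        rw [atilP_Fc, atilP_Fc]; omega
      have hbt : btilP c' E' k = btilP c E k := by
        rw [btilP_Fc c' E' k (by omega), btilP_Fc c E k (by omega)]; omega
      rw [hat, hbt]
end

section
/- Any two chains of i-boxes with the same finite range [a, b] (a, b ∈ ℤ, a ≤ b) are related by a finite composition of box moves. -/
open Classical

/-! ## Auxiliary lemmas for Statement 7 -/

/-- Box moves are symmetric. -/
lemma moveRel_symm (l : ℕ) : Symmetric (moveRel l) := by
  rintro p q ⟨s, hm, rfl⟩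
  refine ⟨s, ?_, ?_⟩
  · obtain ⟨h1, h2, h3⟩ := hm
    refine ⟨h1, h2, ?_⟩
    rcases h3 with h | ⟨h2s, hne⟩
    · exact Or.inl h
    · refine Or.inr ⟨h2s, ?_⟩
      cases ha : p.2 (s-1) <;> cases hb : p.2 s <;>
        simp_all [nuMove]
  · apply Prod.ext
    · by_cases hs : s = 1
      · subst hs
        cases hp1 : p.2 1 <;> simp [nuMove, hp1]
      · simp [nuMove, hs]
    · funext k
      simp only [nuMove]
      by_cases hk : k = s - 1 ∨ k = s
      · rw [if_pos hk, if_pos hk, Bool.not_not]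
      · rw [if_neg hk, if_neg hk]

/-- One-step transport of a box move along `pairEqOn`. -/
lemma moveRel_transport (l : ℕ) {x y z : ℤ × (ℕ → Bool)} (hxy : pairEqOn l x y)
    (h : moveRel l y z) : ∃ z', moveRel l x z' ∧ pairEqOn l z' z := by
  obtain ⟨s, ⟨h1, h2, h3⟩, rfl⟩ := h
  obtain ⟨hc, hE⟩ := hxy
  have hE' : ∀ m, 1 ≤ m → m < l → x.2 m = y.2 m := hE
  refine ⟨nuMove s x, ⟨s, ⟨h1, h2, ?_⟩, rfl⟩, ?_, ?_⟩
  · rcases h3 with h | ⟨h2s, hne⟩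
    · exact Or.inl h
    · refine Or.inr ⟨h2s, ?_⟩
      rw [hE' (s-1) (by omega) (by omega), hE' s (by omega) (by omega)]
      exact hne
  · simp only [nuMove]
    by_cases hs : s = 1
    · subst hs
      rw [hE' 1 le_rfl h2, hc]
    · rw [if_neg hs, if_neg hs, hc]
  · intro m hm1 hml
    simp only [nuMove]
    by_cases hk : m = s - 1 ∨ m = s
    · rw [if_pos hk, if_pos hk, hE' m hm1 hml]
    · rw [if_neg hk, if_neg hk, hE' m hm1 hml]

/-- Transport of a chain of box moves along `pairEqOn`. -/
lemma rtg_transport (l : ℕ) {x y w : ℤ × (ℕ → Bool)} (hxy : pairEqOn l x y)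
    (h : Relation.ReflTransGen (moveRel l) y w) :
    ∃ w', Relation.ReflTransGen (moveRel l) x w' ∧ pairEqOn l w' w := by
  induction h with
  | refl => exact ⟨x, Relation.ReflTransGen.refl, hxy⟩
  | tail _ hstep ih =>
      obtain ⟨b', hb', hbeq⟩ := ih
      obtain ⟨w', hw', hweq⟩ := moveRel_transport l hbeq hstep
      exact ⟨w', hb'.tail hw', hweq⟩

/-- Every chain data with left end `a` can be moved to the canonical one `(a, all R)`. -/
lemma reach_canon (l : ℕ) (a : ℤ) :
    ∀ n (p : ℤ × (ℕ → Bool)),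
      ((Finset.Ico 1 l).filter (fun m => p.2 m = true)).sum id = n →
      atilP p.1 p.2 l = a →
      ∃ r, Relation.ReflTransGen (moveRel l) p r ∧ r.1 = a ∧
        ∀ m, 1 ≤ m → m < l → r.2 m = false := by
  intro n
  induction n using Nat.strong_induction_on with
  | _ n ih =>
    intro p hsum hatil
    set S := (Finset.Ico 1 l).filter (fun m => p.2 m = true) with hS
    by_cases hne : S.Nonempty
    · -- pick the leftmost L
      obtain ⟨s, hsS, hsmin⟩ : ∃ s ∈ S, ∀ m ∈ S, s ≤ m :=
        ⟨S.min' hne, S.min'_mem hne, fun m hm => S.min'_le m hm⟩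
      have hsIco : s ∈ Finset.Ico 1 l := (Finset.mem_filter.mp hsS).1
      have hs1 : 1 ≤ s := (Finset.mem_Ico.mp hsIco).1
      have hsl : s < l := (Finset.mem_Ico.mp hsIco).2
      have hst : p.2 s = true := by
        have := Finset.mem_filter.mp hsS
        simpa using this.2
      have hkey : id s + (S.erase s).sum id = n := by
        have h := Finset.add_sum_erase S id hsS
        rw [hsum] at h
        exact h
      simp only [id_eq] at hkey
      by_cases hs1' : s = 1
      · -- move ν₁ : kill the L at position 1
        subst hs1'
        set q := nuMove 1 p with hq
        have hq1 : q.1 = p.1 - 1 := by simp [hq, nuMove, hst]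
        have hq2 : ∀ m, m ≠ 0 → m ≠ 1 → q.2 m = p.2 m := by
          intro m h0 h1
          simp only [hq, nuMove]
          rw [if_neg]
          push_neg
          exact ⟨by omega, h1⟩
        have hq21 : q.2 1 = false := by
          simp [hq, nuMove, hst]
        have hSq : (Finset.Ico 1 l).filter (fun m => q.2 m = true) = S.erase 1 := by
          ext m
          simp only [Finset.mem_filter, Finset.mem_erase, hS, Finset.mem_Ico]
          constructor
          · rintro ⟨⟨hm1, hml⟩, hmt⟩
            by_cases hm1' : m = 1
            · subst hm1'; rw [hq21] at hmt; exact absurd hmt (by simp)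
            · rw [hq2 m (by omega) hm1'] at hmt
              exact ⟨hm1', ⟨⟨hm1, hml⟩, hmt⟩⟩
          · rintro ⟨hm1', ⟨⟨hm1, hml⟩, hmt⟩⟩
            rw [hq2 m (by omega) hm1']
            exact ⟨⟨hm1, hml⟩, hmt⟩
        have hcard : (S.erase 1).card + 1 = S.card := by
          rw [Finset.card_erase_of_mem hsS]
          have : 1 ≤ S.card := Finset.card_pos.mpr hne
          omega
        have hatil' : atilP q.1 q.2 l = a := by
          simp only [atilP] at hatil ⊢
          rw [← hS] at hatil
          rw [hSq, hq1]
          omega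
        obtain ⟨r, hr, hr1, hr2⟩ := ih (∑ x ∈ S.erase 1, x) (by omega) q
          (by rw [hSq]; rfl) hatil'
        exact ⟨r, Relation.ReflTransGen.head ⟨1, ⟨le_rfl, hsl, Or.inl rfl⟩, hq⟩ hr, hr1, hr2⟩
      · -- move ν_s : swap the L at position s with the R at position s-1
        have hs2 : 2 ≤ s := by omega
        have hsm1f : p.2 (s - 1) = false := by
          by_contra h
          have h' : p.2 (s-1) = true := by simpa using h
          have : s - 1 ∈ S := by
            rw [hS]
            exact Finset.mem_filter.mpr ⟨Finset.mem_Ico.mpr ⟨by omega, by omega⟩, h'⟩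
          have := hsmin _ this
          omega
        set q := nuMove s p with hq
        have hq1 : q.1 = p.1 := by simp [hq, nuMove, hs1']
        have hq2 : ∀ m, m ≠ s - 1 → m ≠ s → q.2 m = p.2 m := by
          intro m h0 h1
          simp only [hq, nuMove]
          rw [if_neg]
          push_neg
          exact ⟨h0, h1⟩
        have hq2s : q.2 s = false := by
          simp [hq, nuMove, hst]
        have hq2s1 : q.2 (s-1) = true := by
          simp [hq, nuMove, hsm1f]
        have hs1notS : s - 1 ∉ S := by
          intro h
          have := hsmin _ h
          omega
        have hSq : (Finset.Ico 1 l).filter (fun m => q.2 m = true)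
            = insert (s-1) (S.erase s) := by
          ext m
          simp only [Finset.mem_filter, Finset.mem_insert, Finset.mem_erase, hS, Finset.mem_Ico]
          constructor
          · rintro ⟨⟨hm1, hml⟩, hmt⟩
            by_cases hm' : m = s - 1
            · exact Or.inl hm'
            · by_cases hm'' : m = s
              · subst hm''; rw [hq2s] at hmt; exact absurd hmt (by simp)
              · rw [hq2 m hm' hm''] at hmt
                exact Or.inr ⟨hm'', ⟨⟨hm1, hml⟩, hmt⟩⟩
          · rintro (hm' | ⟨hm'', ⟨⟨hm1, hml⟩, hmt⟩⟩)
            · subst hm'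
              exact ⟨⟨by omega, by omega⟩, hq2s1⟩
            · rw [hq2 m (fun h => hs1notS (h ▸ (Finset.mem_filter.mpr
                ⟨Finset.mem_Ico.mpr ⟨hm1, hml⟩, hmt⟩))) hm'']
              exact ⟨⟨hm1, hml⟩, hmt⟩
        have hs1notE : s - 1 ∉ S.erase s := fun h => hs1notS (Finset.mem_of_mem_erase h)
        have hcard : (insert (s-1) (S.erase s)).card = S.card := by
          rw [Finset.card_insert_of_notMem hs1notE, Finset.card_erase_of_mem hsS]
          have : 1 ≤ S.card := Finset.card_pos.mpr hne
          omega
        have hsum' : (∑ x ∈ insert (s-1) (S.erase s), x) + 1 = n := by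
          rw [Finset.sum_insert hs1notE]
          omega
        have hatil' : atilP q.1 q.2 l = a := by
          simp only [atilP] at hatil ⊢
          rw [← hS] at hatil
          rw [hSq, hq1, hcard]
          exact hatil
        obtain ⟨r, hr, hr1, hr2⟩ := ih (∑ x ∈ insert (s-1) (S.erase s), x) (by omega) q
          (by rw [hSq]; rfl) hatil'
        have hmov : Movable l s p := by
          refine ⟨hs1, hsl, Or.inr ⟨hs2, ?_⟩⟩
          rw [hsm1f, hst]
          simp
        exact ⟨r, Relation.ReflTransGen.head ⟨s, hmov, hq⟩ hr, hr1, hr2⟩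
    · -- no L's: already canonical
      refine ⟨p, Relation.ReflTransGen.refl, ?_, ?_⟩
      · simp only [atilP] at hatil
        rw [← hS, Finset.not_nonempty_iff_eq_empty.mp hne] at hatil
        simpa using hatil
      · intro m hm1 hml
        by_contra h
        have h' : p.2 m = true := by simpa using h
        exact hne ⟨m, Finset.mem_filter.mpr ⟨Finset.mem_Ico.mpr ⟨hm1, hml⟩, h'⟩⟩

/-- Any two chains of `i`-boxes with the same finite range `[a, b]`
are related by a finite composition of box moves (up to the identification of chain
data agreeing on the relevant range). -/
theorem chains_same_range_related {I : Type*} (i : ℤ → I) (hocc : OccAll i)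
    (a b : ℤ) (hab : a ≤ b) (l : ℕ) (hl : (l : ℤ) = b - a + 1)
    (p q : ℤ × (ℕ → Bool))
    (hp : atilP p.1 p.2 l = a ∧ btilP p.1 p.2 l = b)
    (hq : atilP q.1 q.2 l = a ∧ btilP q.1 q.2 l = b) :
    ∃ q', Relation.ReflTransGen (moveRel l) p q' ∧ pairEqOn l q' q := by
  obtain ⟨rp, hrp, hrp1, hrp2⟩ := reach_canon l a _ p rfl hp.1
  obtain ⟨rq, hrq, hrq1, hrq2⟩ := reach_canon l a _ q rfl hq.1
  have hsym := (@Relation.ReflTransGen.symmetric _ (moveRel l) ⟨moveRel_symm l⟩).symm _ _ hrq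
  have heq : pairEqOn l rp rq := ⟨by rw [hrp1, hrq1], fun m h1 h2 => by
    rw [hrp2 m h1 h2, hrq2 m h1 h2]⟩
  obtain ⟨q', hq', hq'eq⟩ := rtg_transport l heq hsym
  exact ⟨q', hrp.trans hq', hq'eq⟩
end

section
/- Let C = (c_{ij})_{i,j ∈ I} be a generalized Cartan matrix with symmetrizer (d_i)_{i ∈ I} (positive integers with d_i c_{ij} = d_j c_{ji}). For any signed word h = (ε_k h_k)_{1 ≤ k ≤ l}, the l × l matrix B̃(h) defined by the Berenstein–Fomin–Zelevinsky formula is skew-symmetrizable with skew-symmetrizer the diagonal matrix D̃ with entries D̃_{kk} = d_{h_k}; that is, d_{h_j} B̃(h)_{jk} = − d_{h_k} B̃(h)_{kj} for all j, k. -/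
open Classical

lemma nxt_spec {I : Type*} (h : ℕ → I) (l a b : ℕ) (hb : nxt h l a = (b : ℕ∞)) :
    a < b ∧ b ≤ l ∧ h b = h a := by
  have hne : {x : ℕ∞ | ∃ k' : ℕ, x = (k' : ℕ∞) ∧ a < k' ∧ k' ≤ l ∧ h k' = h a}.Nonempty := by
    by_contra hc
    rw [Set.not_nonempty_iff_eq_empty] at hc
    rw [nxt, hc, sInf_empty] at hb
    exact (WithTop.coe_ne_top hb.symm)
  have hmem := csInf_mem hne
  rw [← nxt, hb] at hmem
  obtain ⟨k', hk', h1, h2, h3⟩ := hmem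
  have hbk : b = k' := by exact_mod_cast hk'
  subst hbk
  exact ⟨h1, h2, h3⟩

lemma condIII_swap {I : Type*} (ε : ℕ → ℤ) (h : ℕ → I) (l j k : ℕ) :
    condIII ε h l k j ↔ condI ε h l j k := Iff.rfl

lemma condIV_swap {I : Type*} (ε : ℕ → ℤ) (h : ℕ → I) (l j k : ℕ) :
    condIV ε h l k j ↔ condII ε h l j k := Iff.rfl

/-- For a generalized Cartan matrix `C` with symmetrizer `d` and any
signed word `(ε_k h_k)_{1 ≤ k ≤ l}`, the BFZ matrix `B̃(h)` is skew-symmetrizable with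
skew-symmetrizer `diag(d_{h_1}, …, d_{h_l})`. -/
theorem Btilde_skew_symmetrizable {I : Type*} (C : I → I → ℤ)
    (hC2 : ∀ x, C x x = 2) (hCneg : ∀ x y, x ≠ y → C x y ≤ 0)
    (d : I → ℤ) (hd : ∀ x, 0 < d x) (hsym : ∀ x y, d x * C x y = d y * C y x)
    (l : ℕ) (ε : ℕ → ℤ) (h : ℕ → I)
    (hε : ∀ k, 1 ≤ k → k ≤ l → ε k = 1 ∨ ε k = -1)
    (j k : ℕ) (hj1 : 1 ≤ j) (hjl : j ≤ l) (hk1 : 1 ≤ k) (hkl : k ≤ l) :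
    d (h j) * Btilde C ε h l j k = -(d (h k) * Btilde C ε h l k j) := by
  by_cases b1 : nxt h l j = (k : ℕ∞)
  · obtain ⟨hjk, -, hhk⟩ := nxt_spec h l j k b1
    have b2 : nxt h l k ≠ (j : ℕ∞) := by
      intro hc; obtain ⟨hkj, -, -⟩ := nxt_spec h l k j hc; omega
    rw [Btilde, Btilde, if_pos b1, if_neg b2, if_pos b1, hhk]
    ring
  by_cases b2 : nxt h l k = (j : ℕ∞)
  · obtain ⟨hkj, -, hhj⟩ := nxt_spec h l k j b2
    rw [Btilde, Btilde, if_neg b1, if_pos b2, if_pos b2, hhj]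
    ring
  by_cases c12 : condI ε h l j k ∨ condII ε h l j k
  · have hjk : j < k := by
      rcases c12 with ⟨_, _, _, hc, _⟩ | ⟨_, _, _, hc, _⟩ <;> exact hc
    have c12' : ¬ (condI ε h l k j ∨ condII ε h l k j) := by
      rintro (⟨_, _, _, hc, _⟩ | ⟨_, _, _, hc, _⟩) <;> omega
    have c34' : condIII ε h l k j ∨ condIV ε h l k j := by
      rw [condIII_swap, condIV_swap]; exact c12
    rw [Btilde, Btilde, if_neg b1, if_neg b2, if_pos c12, if_neg b2, if_neg b1,
      if_neg c12', if_pos c34']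
    linear_combination ε k * hsym (h j) (h k)
  by_cases c34 : condIII ε h l j k ∨ condIV ε h l j k
  · have c12' : condI ε h l k j ∨ condII ε h l k j := by
      rw [condIII_swap, condIV_swap] at c34; exact c34
    rw [Btilde, Btilde, if_neg b1, if_neg b2, if_neg c12, if_pos c34, if_neg b2, if_neg b1,
      if_pos c12']
    linear_combination (- ε j) * hsym (h j) (h k)
  · have c12' : ¬ (condI ε h l k j ∨ condII ε h l k j) := by
      rintro (hc | hc)
      exacts [c34 (Or.inl hc), c34 (Or.inr hc)]
    have c34' : ¬ (condIII ε h l k j ∨ condIV ε h l k j) := by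
      rintro (hc | hc)
      exacts [c12 (Or.inl hc), c12 (Or.inr hc)]
    rw [Btilde, Btilde, if_neg b1, if_neg b2, if_neg c12, if_neg c34, if_neg b2, if_neg b1,
      if_neg c12', if_neg c34']
    ring
end

section
/- Left reflection preserves the exchange matrix of a signed word: if h = (h_1, h_2, ..., h_l) is a signed word on the index set of a generalized Cartan matrix and h' = (−h_1, h_2, ..., h_l) is obtained by negating the sign of the first letter, then B(h') = B(h), where B denotes the restriction of B̃ to columns in K^ex. -/
open Classical

lemma nxt_lt' {I : Type*} (h : ℕ → I) (l j k : ℕ) (hjk : nxt h l j = (k : ℕ∞)) :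
    j < k := by
  have h1 : ((j + 1 : ℕ) : ℕ∞) ≤ nxt h l j := by
    unfold nxt
    refine le_sInf ?_
    rintro x ⟨k', rfl, hk1, hk2, hk3⟩
    exact_mod_cast hk1
  rw [hjk] at h1
  have := Nat.cast_le.mp h1
  omega

/-- Left reflection preserves the exchange matrix of a signed word:
negating the sign of the first letter does not change `B(h)` (the restriction of
`B̃(h)` to columns in `K^ex`). -/
theorem left_reflection_B {I : Type*} (C : I → I → ℤ)
    (hC2 : ∀ x, C x x = 2) (hCneg : ∀ x y, x ≠ y → C x y ≤ 0)
    (l : ℕ) (ε : ℕ → ℤ) (h : ℕ → I)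
    (hε : ∀ k, 1 ≤ k → k ≤ l → ε k = 1 ∨ ε k = -1) :
    ∀ j k, 1 ≤ j → j ≤ l → k ∈ Kex h l →
      Btilde C (Function.update ε 1 (- ε 1)) h l j k = Btilde C ε h l j k := by
  intro j k hj hjl hk
  obtain ⟨hk1, t, hkt, htl, hth⟩ := hk
  set ε' := Function.update ε 1 (-ε 1) with hε'
  have heq : ∀ m, 2 ≤ m → ε' m = ε m := by
    intro m hm
    rw [hε', Function.update_of_ne (by omega : m ≠ 1)]
  have hI : condI ε' h l j k ↔ condI ε h l j k := by
    unfold condI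
    constructor <;> rintro ⟨j1, h1, h2, h3, h4, h5⟩ <;>
      refine ⟨j1, h1, ?_, h3, h4, h5⟩ <;>
      · rw [heq j1 (by omega), heq k (by omega)] at *
        exact h2
  have hII : condII ε' h l j k ↔ condII ε h l j k := by
    unfold condII
    constructor <;> rintro ⟨k1, h1, h2, h3, h4, h5⟩ <;>
      refine ⟨k1, h1, ?_, h3, h4, h5⟩ <;>
      · rw [heq k1 (by omega), heq k (by omega)] at *
        exact h2
  have hIII : condIII ε' h l j k ↔ condIII ε h l j k := by
    unfold condIII
    constructor <;> rintro ⟨k1, h1, h2, h3, h4, h5⟩ <;>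
      refine ⟨k1, h1, ?_, h3, h4, h5⟩ <;>
      · rw [heq k1 (by omega), heq j (by omega)] at *
        exact h2
  have hIV : condIV ε' h l j k ↔ condIV ε h l j k := by
    unfold condIV
    constructor <;> rintro ⟨j1, h1, h2, h3, h4, h5⟩ <;>
      refine ⟨j1, h1, ?_, h3, h4, h5⟩ <;>
      · rw [heq j1 (by omega), heq j (by omega)] at *
        exact h2
  unfold Btilde
  by_cases c1 : nxt h l j = (k : ℕ∞)
  · have hjk := nxt_lt' h l j k c1
    rw [if_pos c1, if_pos c1, heq k (by omega)]
  · rw [if_neg c1, if_neg c1]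
    by_cases c2 : nxt h l k = (j : ℕ∞)
    · have hkj := nxt_lt' h l k j c2
      rw [if_pos c2, if_pos c2, heq j (by omega)]
    · rw [if_neg c2, if_neg c2]
      simp only [hI, hII, hIII, hIV]
      by_cases c3 : condI ε h l j k ∨ condII ε h l j k
      · have hjk : j < k := by
          rcases c3 with ⟨j1, _, _, h3, _, _⟩ | ⟨k1, _, _, h3, _, _⟩ <;> exact h3
        rw [if_pos c3, if_pos c3, heq k (by omega)]
      · rw [if_neg c3, if_neg c3]
        by_cases c4 : condIII ε h l j k ∨ condIV ε h l j k
        · have hkj : k < j := by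
            rcases c4 with ⟨k1, _, _, h3, _, _⟩ | ⟨j1, _, _, h3, _, _⟩ <;> exact h3
          rw [if_pos c4, if_pos c4, heq j (by omega)]
        · rw [if_neg c4, if_neg c4]
end

section
/- Stabilization of exchange matrices for infinite chains: let 𝔠 = (𝔠_k)_{k ≥ 1} be a chain of i-boxes of infinite length, and for s ≥ 1 let 𝔠_s denote the subchain (𝔠_k)_{1 ≤ k ≤ s}. Then for any s ≥ 1 and any (i, j) ∈ K(𝔠_s) × K^ex(𝔠_s), one has B(𝔠_t)_{ij} = B(𝔠_s)_{ij} for all t ≥ s. Consequently the colimit matrix B(𝔠) with B(𝔠)|_{K(𝔠_s) × K^ex(𝔠_s)} = B(𝔠_s) is well defined. -/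
open Classical

section NxtAux

variable {I : Type*} {h : ℕ → I}

lemma nxt_le_of_mem {l k m : ℕ} (hm : k < m) (hml : m ≤ l) (hh : h m = h k) :
    nxt h l k ≤ (m : ℕ∞) :=
  sInf_le ⟨m, rfl, hm, hml, hh⟩

lemma nxt_anti {s t k : ℕ} (hst : s ≤ t) : nxt h t k ≤ nxt h s k := by
  apply sInf_le_sInf
  rintro x ⟨k', rfl, h1, h2, h3⟩
  exact ⟨k', rfl, h1, h2.trans hst, h3⟩

lemma nxt_eq_of_le {s t k : ℕ} (hst : s ≤ t) (hle : nxt h s k ≤ (s : ℕ∞)) :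
    nxt h t k = nxt h s k := by
  refine le_antisymm (nxt_anti hst) (le_sInf ?_)
  rintro x ⟨k', rfl, h1, h2, h3⟩
  by_cases hks : k' ≤ s
  · exact sInf_le ⟨k', rfl, h1, hks, h3⟩
  · exact hle.trans (by exact_mod_cast (not_le.mp hks).le)

lemma nxt_top_or_le {s k : ℕ} : nxt h s k ≤ (s : ℕ∞) ∨ nxt h s k = ⊤ := by
  by_cases hne : {x : ℕ∞ | ∃ k' : ℕ, x = (k' : ℕ∞) ∧ k < k' ∧ k' ≤ s ∧ h k' = h k}.Nonempty
  · obtain ⟨x, hx⟩ := hne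
    obtain ⟨k', rfl, h1, h2, h3⟩ := hx
    exact Or.inl ((nxt_le_of_mem h1 h2 h3).trans (by exact_mod_cast h2))
  · right
    rw [Set.not_nonempty_iff_eq_empty] at hne
    simp [nxt, hne]

lemma nxt_gt_of_top {s t k : ℕ} (htop : nxt h s k = ⊤) : (s : ℕ∞) < nxt h t k := by
  have : ((s + 1 : ℕ) : ℕ∞) ≤ nxt h t k := by
    apply le_sInf
    rintro x ⟨k', rfl, h1, h2, h3⟩
    have hks : ¬ k' ≤ s := by
      intro hks
      have := nxt_le_of_mem h1 hks h3
      rw [htop] at this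
      exact ENat.coe_ne_top k' (top_le_iff.mp this)
    exact_mod_cast not_le.mp hks
  exact lt_of_lt_of_le (by exact_mod_cast Nat.lt_succ_self s) this

end NxtAux

/-- Stabilization for infinite chains: for a chain of `i`-boxes of
infinite length with data `(c, E)` and its length-`s` subchains, the entries of the
exchange matrices `B(𝔠_t)` on `K(𝔠_s) × K^ex(𝔠_s)` agree with those of `B(𝔠_s)` for
all `t ≥ s`; hence the colimit matrix `B(𝔠)` is well defined. -/
theorem subchain_matrix_stabilizes {I : Type*} (C : I → I → ℤ)
    (hC2 : ∀ x, C x x = 2) (hCneg : ∀ x y, x ≠ y → C x y ≤ 0)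
    (i : ℤ → I) (hocc : OccAll i) (c : ℤ) (E : ℕ → Bool)
    (s : ℕ) (hs : 1 ≤ s) (x y : ℕ) (hx1 : 1 ≤ x) (hxs : x ≤ s)
    (hy : y ∈ Kex (colorP i c E) s) (t : ℕ) (hts : s ≤ t) :
    Btilde C (epsP E) (colorP i c E) t x y
      = Btilde C (epsP E) (colorP i c E) s x y := by
  set h := colorP i c E with hh
  set ε := epsP E with hε
  obtain ⟨hy1, t', hyt', ht's, hht'⟩ := hy
  have hys : nxt h s y ≤ (s : ℕ∞) :=
    (nxt_le_of_mem hyt' ht's hht').trans (by exact_mod_cast ht's)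
  have hyeq : nxt h t y = nxt h s y := nxt_eq_of_le hts hys
  by_cases hxcase : nxt h s x ≤ (s : ℕ∞)
  · have hxeq : nxt h t x = nxt h s x := nxt_eq_of_le hts hxcase
    unfold Btilde condI condII condIII condIV
    rw [hxeq, hyeq]
  · have htop : nxt h s x = ⊤ := nxt_top_or_le.resolve_left hxcase
    have hnt : (s : ℕ∞) < nxt h t x := nxt_gt_of_top htop
    have hyles : y ≤ s := hyt'.le.trans ht's
    have c1t : ¬ nxt h t x = (y : ℕ∞) := by
      intro he
      rw [he] at hnt
      exact absurd (by exact_mod_cast hnt) (not_lt.mpr hyles)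
    have c1s : ¬ nxt h s x = (y : ℕ∞) := by simp [htop]
    have cI_t : ¬ condI ε h t x y := by
      rintro ⟨j1, hj1, -, -, -, hj1y⟩
      have hs1 : (s : ℕ∞) < (j1 : ℕ∞) := hj1 ▸ hnt
      have : (j1 : ℕ∞) < (s : ℕ∞) := lt_of_lt_of_le (hyeq ▸ hj1y) hys
      exact absurd (hs1.trans this) (lt_irrefl _)
    have cI_s : ¬ condI ε h s x y := by
      rintro ⟨j1, hj1, -⟩
      rw [htop] at hj1
      exact (ENat.top_ne_coe j1) hj1
    have cIV_t : ¬ condIV ε h t x y := by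
      rintro ⟨j1, hj1, -, -, -, hj1y⟩
      have hs1 : (s : ℕ∞) < (j1 : ℕ∞) := hj1 ▸ hnt
      have : (j1 : ℕ∞) < (s : ℕ∞) := lt_of_lt_of_le (hyeq ▸ hj1y) hys
      exact absurd (hs1.trans this) (lt_irrefl _)
    have cIV_s : ¬ condIV ε h s x y := by
      rintro ⟨j1, hj1, -⟩
      rw [htop] at hj1
      exact (ENat.top_ne_coe j1) hj1
    have cII_iff : condII ε h t x y ↔ condII ε h s x y := by
      constructor
      · rintro ⟨k1, hk1, hεe, hxy, hyk1, -⟩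
        exact ⟨k1, hyeq ▸ hk1, hεe, hxy, hyk1, by simp [htop]⟩
      · rintro ⟨k1, hk1, hεe, hxy, hyk1, -⟩
        refine ⟨k1, hyeq ▸ hk1, hεe, hxy, hyk1, ?_⟩
        exact lt_of_le_of_lt (hk1 ▸ hys) hnt
    have cIII_iff : condIII ε h t x y ↔ condIII ε h s x y := by
      constructor
      · rintro ⟨k1, hk1, hεe, hxy, hyk1, -⟩
        exact ⟨k1, hyeq ▸ hk1, hεe, hxy, hyk1, by simp [htop]⟩
      · rintro ⟨k1, hk1, hεe, hxy, hyk1, -⟩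
        refine ⟨k1, hyeq ▸ hk1, hεe, hxy, hyk1, ?_⟩
        exact lt_of_le_of_lt (hk1 ▸ hys) hnt
    unfold Btilde
    rw [if_neg c1t, if_neg c1s, hyeq]
    by_cases h2 : nxt h s y = (x : ℕ∞)
    · rw [if_pos h2, if_pos h2]
    · rw [if_neg h2, if_neg h2]
      have hIII : (condI ε h t x y ∨ condII ε h t x y) ↔
          (condI ε h s x y ∨ condII ε h s x y) :=
        or_congr (iff_of_false cI_t cI_s) cII_iff
      have hIIIIV : (condIII ε h t x y ∨ condIV ε h t x y) ↔
          (condIII ε h s x y ∨ condIV ε h s x y) :=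
        or_congr cIII_iff (iff_of_false cIV_t cIV_s)
      by_cases h3 : condI ε h s x y ∨ condII ε h s x y
      · rw [if_pos (hIII.mpr h3), if_pos h3]
      · rw [if_neg (fun hc => h3 (hIII.mp hc)), if_neg h3]
        by_cases h4 : condIII ε h s x y ∨ condIV ε h s x y
        · rw [if_pos (hIIIIV.mpr h4), if_pos h4]
        · rw [if_neg (fun hc => h4 (hIIIIV.mp hc)), if_neg h4]
end

section
/- Reversal duality for signed-word conditions: let σ: ℤ → ℤ be x ↦ −x, let i' = (i'_k) with i'_k = i_{−k}, and for a chain of i-boxes 𝔠 = (𝔠_s) with 𝔠_s = [a_s, b_s] define the chain of i'-boxes 𝔠' = (𝔠'_s) with 𝔠'_s = [−b_s, −a_s]. Then 𝔠' is a chain of i'-boxes, and for any j, k, the signed word h(𝔠) satisfies condition (i): ε_{j[1]} = ε_k = −1, j < k < j[1] < k[1], if and only if the signed word h(𝔠') satisfies condition (iii) with j and k swapped: ε'_{k[1]} = ε'_j = +1, j < k < j[1] < k[1] (indices in the swapped roles); and similarly conditions (ii) ↔ (iv) correspond under this duality. -/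
open Classical

/-- Signed condition (i): `ε_{j[1]} = ε_k = -1` and `j < k < j[1] < k[1]`. -/
noncomputable def scondI {I : Type*} (ε : ℕ → ℤ) (h : ℕ → I) (l j k : ℕ) : Prop :=
  ∃ j1 : ℕ, nxt h l j = (j1 : ℕ∞) ∧ ε j1 = -1 ∧ ε k = -1 ∧
    j < k ∧ k < j1 ∧ (j1 : ℕ∞) < nxt h l k

/-- Signed condition (ii): `ε_k = -ε_{k[1]} = -1` and `j < k < k[1] < j[1]`. -/
noncomputable def scondII {I : Type*} (ε : ℕ → ℤ) (h : ℕ → I) (l j k : ℕ) : Prop :=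
  ∃ k1 : ℕ, nxt h l k = (k1 : ℕ∞) ∧ ε k = -1 ∧ ε k1 = 1 ∧
    j < k ∧ k < k1 ∧ (k1 : ℕ∞) < nxt h l j

/-- Signed condition (iii): `ε_{k[1]} = ε_j = 1` and `k < j < k[1] < j[1]`. -/
noncomputable def scondIII {I : Type*} (ε : ℕ → ℤ) (h : ℕ → I) (l j k : ℕ) : Prop :=
  ∃ k1 : ℕ, nxt h l k = (k1 : ℕ∞) ∧ ε k1 = 1 ∧ ε j = 1 ∧
    k < j ∧ j < k1 ∧ (k1 : ℕ∞) < nxt h l j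

/-- Signed condition (iv): `ε_j = -ε_{j[1]} = 1` and `k < j < j[1] < k[1]`. -/
noncomputable def scondIV {I : Type*} (ε : ℕ → ℤ) (h : ℕ → I) (l j k : ℕ) : Prop :=
  ∃ j1 : ℕ, nxt h l j = (j1 : ℕ∞) ∧ ε j = 1 ∧ ε j1 = -1 ∧
    k < j ∧ j < j1 ∧ (j1 : ℕ∞) < nxt h l k

/-! ### Auxiliary lemmas for the reversal duality -/

private lemma int_sInf_negpre (S : Set ℤ) (hne : S.Nonempty) (hbdd : BddAbove S) :
    sInf {t : ℤ | -t ∈ S} = - sSup S := by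
  apply IsLeast.csInf_eq
  constructor
  · show -(-sSup S) ∈ S
    rw [neg_neg]; exact Int.csSup_mem hne hbdd
  · intro t ht
    have : -t ≤ sSup S := le_csSup hbdd ht
    linarith

private lemma int_sSup_negpre (S : Set ℤ) (hne : S.Nonempty) (hbdd : BddBelow S) :
    sSup {t : ℤ | -t ∈ S} = - sInf S := by
  apply IsGreatest.csSup_eq
  constructor
  · show -(-sInf S) ∈ S
    rw [neg_neg]; exact Int.csInf_mem hne hbdd
  · intro t ht
    have : sInf S ≤ -t := csInf_le hbdd ht
    linarith

private lemma oabove_neg {I : Type*} (i : ℤ → I) (hocc : OccAll i) (t0 y : ℤ) :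
    oabove (fun x => i (-x)) (i t0) (-y) = - obelow i (i t0) y := by
  have hS : {t : ℤ | t ≤ y ∧ i t = i t0}.Nonempty := by
    obtain ⟨s, hs1, hs2⟩ := (hocc t0 y).1
    exact ⟨s, hs1, hs2⟩
  have hbdd : BddAbove {t : ℤ | t ≤ y ∧ i t = i t0} := ⟨y, fun x hx => hx.1⟩
  have hset : {t : ℤ | -y ≤ t ∧ i (-t) = i t0} =
      {t : ℤ | -t ∈ {t : ℤ | t ≤ y ∧ i t = i t0}} := by
    ext t
    constructor
    · rintro ⟨h1, h2⟩; exact ⟨by linarith, h2⟩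
    · rintro ⟨h1, h2⟩; exact ⟨by linarith, h2⟩
  unfold oabove obelow
  rw [hset, int_sInf_negpre _ hS hbdd]

private lemma obelow_neg {I : Type*} (i : ℤ → I) (hocc : OccAll i) (t0 x : ℤ) :
    obelow (fun x => i (-x)) (i t0) (-x) = - oabove i (i t0) x := by
  have hS : {t : ℤ | x ≤ t ∧ i t = i t0}.Nonempty := by
    obtain ⟨s, hs1, hs2⟩ := (hocc t0 x).2
    exact ⟨s, hs1, hs2⟩
  have hbdd : BddBelow {t : ℤ | x ≤ t ∧ i t = i t0} := ⟨x, fun z hz => hz.1⟩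
  have hset : {t : ℤ | t ≤ -x ∧ i (-t) = i t0} =
      {t : ℤ | -t ∈ {t : ℤ | x ≤ t ∧ i t = i t0}} := by
    ext t
    constructor
    · rintro ⟨h1, h2⟩; exact ⟨by linarith, h2⟩
    · rintro ⟨h1, h2⟩; exact ⟨by linarith, h2⟩
  unfold oabove obelow
  rw [hset, int_sSup_negpre _ hS hbdd]

private lemma atilP_neg (c : ℤ) (E : ℕ → Bool) (k : ℕ) :
    atilP (-c) (fun m => !(E m)) k = -(btilP c E k) := by
  unfold atilP btilP
  have h : (Finset.Ico 1 k).filter (fun m => (!(E m)) = true) =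
      (Finset.Ico 1 k).filter (fun m => E m = false) := by
    apply Finset.filter_congr
    intro m _; simp
  rw [h]; ring

private lemma btilP_neg (c : ℤ) (E : ℕ → Bool) (k : ℕ) :
    btilP (-c) (fun m => !(E m)) k = -(atilP c E k) := by
  unfold atilP btilP
  have h : (Finset.Ico 1 k).filter (fun m => (!(E m)) = false) =
      (Finset.Ico 1 k).filter (fun m => E m = true) := by
    apply Finset.filter_congr
    intro m _; simp
  rw [h]; ring

private lemma aP_bP_neg {I : Type*} (i : ℤ → I) (hocc : OccAll i) (c : ℤ) (E : ℕ → Bool)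
    (k : ℕ) :
    aP (fun x => i (-x)) (-c) (fun m => !(E m)) k = -(bP i c E k) ∧
    bP (fun x => i (-x)) (-c) (fun m => !(E m)) k = -(aP i c E k) := by
  unfold aP bP
  by_cases hk : k = 1
  · simp [hk]
  · simp only [hk, if_false]
    by_cases hE : E (k - 1)
    · simp only [hE, Bool.not_true, Bool.false_eq_true, if_true, if_false]
      constructor
      · have h1 : i (-(btilP (-c) (fun m => !(E m)) k)) = i (atilP c E k) := by
          rw [btilP_neg]; simp
        rw [h1, atilP_neg]
        exact oabove_neg i hocc (atilP c E k) (btilP c E k)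
      · rw [btilP_neg]
    · simp only [hE, Bool.not_false, Bool.false_eq_true, if_true, if_false]
      constructor
      · rw [atilP_neg]
      · have h1 : i (-(atilP (-c) (fun m => !(E m)) k)) = i (btilP c E k) := by
          rw [atilP_neg]; simp
        rw [h1, btilP_neg]
        exact obelow_neg i hocc (btilP c E k) (atilP c E k)

private lemma color_ab {I : Type*} (i : ℤ → I) (hocc : OccAll i) (c : ℤ) (E : ℕ → Bool)
    (k : ℕ) : i (aP i c E k) = i (bP i c E k) := by
  unfold aP bP
  by_cases hk : k = 1
  · simp [hk]
  · simp only [hk, if_false]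
    by_cases hE : E (k - 1)
    · simp only [hE, if_true]
      have hS : {t : ℤ | t ≤ btilP c E k ∧ i t = i (atilP c E k)}.Nonempty := by
        obtain ⟨s, hs1, hs2⟩ := (hocc (atilP c E k) (btilP c E k)).1
        exact ⟨s, hs1, hs2⟩
      have hbdd : BddAbove {t : ℤ | t ≤ btilP c E k ∧ i t = i (atilP c E k)} :=
        ⟨btilP c E k, fun x hx => hx.1⟩
      have := Int.csSup_mem hS hbdd
      exact this.2.symm
    · simp only [hE, if_false]
      have hS : {t : ℤ | atilP c E k ≤ t ∧ i t = i (btilP c E k)}.Nonempty := by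
        obtain ⟨s, hs1, hs2⟩ := (hocc (btilP c E k) (atilP c E k)).2
        exact ⟨s, hs1, hs2⟩
      have hbdd : BddBelow {t : ℤ | atilP c E k ≤ t ∧ i t = i (btilP c E k)} :=
        ⟨atilP c E k, fun x hx => hx.1⟩
      have := Int.csInf_mem hS hbdd
      exact this.2

private lemma colorP_neg {I : Type*} (i : ℤ → I) (hocc : OccAll i) (c : ℤ) (E : ℕ → Bool) :
    colorP (fun x => i (-x)) (-c) (fun m => !(E m)) = colorP i c E := by
  funext k
  unfold colorP
  show i (-(aP (fun x => i (-x)) (-c) (fun m => !(E m)) k)) = i (aP i c E k)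
  rw [(aP_bP_neg i hocc c E k).1, neg_neg]
  exact (color_ab i hocc c E k).symm

private lemma epsP_neg (E : ℕ → Bool) (k : ℕ) (hk : 2 ≤ k) :
    epsP (fun m => !(E m)) k = - epsP E k := by
  unfold epsP
  have hk1 : ¬ (k = 1) := by omega
  by_cases hE : E (k - 1) <;> simp [hk1, hE]

private lemma epsP_ne_one {E : ℕ → Bool} {k : ℕ} (h : epsP E k = -1) : k ≠ 1 := by
  intro hk
  rw [hk] at h
  simp [epsP] at h

/-- Reversal duality: let `i' x = i (-x)` and let `𝔠'` be the chain
of `i'`-boxes with boxes `[-b_s, -a_s]`. Then `𝔠'` is a chain of `i'`-boxes — for a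
chain with data `(c, E)` it is the chain with data `(-c, !E)`, and reversal of an
abstract chain is an abstract chain — and the signed word of `𝔠` satisfies condition
(i) (resp. (ii)) at `(j,k)` iff the signed word of `𝔠'` satisfies condition (iii)
(resp. (iv)) with `j` and `k` swapped. -/
theorem reversal_duality {I : Type*} (i : ℤ → I) (hocc : OccAll i)
    (c : ℤ) (E : ℕ → Bool) (l : ℕ) :
    (∀ k, 1 ≤ k → k ≤ l →
      aP (fun x => i (-x)) (-c) (fun m => !(E m)) k = -(bP i c E k) ∧
      bP (fun x => i (-x)) (-c) (fun m => !(E m)) k = -(aP i c E k)) ∧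
    (∀ a b atil btil, IsIBoxChain i l a b atil btil →
      IsIBoxChain (fun x => i (-x)) l (fun s => - b s) (fun s => - a s)
        (fun s => - btil s) (fun s => - atil s)) ∧
    (∀ j k, 1 ≤ j → 1 ≤ k →
      (scondI (epsP E) (colorP i c E) l j k ↔
        scondIII (epsP (fun m => !(E m))) (colorP (fun x => i (-x)) (-c) (fun m => !(E m))) l k j)) ∧
    (∀ j k, 1 ≤ j → 1 ≤ k →
      (scondII (epsP E) (colorP i c E) l j k ↔
        scondIV (epsP (fun m => !(E m))) (colorP (fun x => i (-x)) (-c) (fun m => !(E m))) l k j)) := by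
  have hcol : colorP (fun x => i (-x)) (-c) (fun m => !(E m)) = colorP i c E :=
    colorP_neg i hocc c E
  refine ⟨fun k _ _ => aP_bP_neg i hocc c E k, ?_, ?_, ?_⟩
  · -- reversal of an abstract chain
    intro a b atil btil h
    constructor
    · intro k hk1 hkl
      obtain ⟨hab, hi⟩ := h.ibox k hk1 hkl
      exact ⟨by linarith, by simpa using hi.symm⟩
    · intro s hs1 hsl
      have hu := h.union_eq s hs1 hsl
      ext x
      have hx := Set.ext_iff.1 hu (-x)
      simp only [Set.mem_iUnion, Set.mem_Icc, exists_prop] at hx ⊢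
      constructor
      · rintro ⟨m, hm, h1, h2⟩
        have := hx.1 ⟨m, hm, by constructor <;> linarith⟩
        constructor <;> linarith
      · rintro ⟨h1, h2⟩
        obtain ⟨m, hm, h3, h4⟩ := hx.2 ⟨by linarith, by linarith⟩
        exact ⟨m, hm, by linarith, by linarith⟩
    · intro s hs1 hsl
      have := h.union_len s hs1 hsl
      linarith
    · intro s hs1 hsl t ht1 ht2 hit
      have hcol' : i (-t) = i (a s) := by
        have := (h.ibox s hs1 hsl).2
        simpa [this] using hit
      have := h.largest s hs1 hsl (-t) (by linarith) (by linarith) hcol'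
      exact ⟨by omega, by omega⟩
  · -- scondI ↔ scondIII
    intro j k hj hk
    rw [hcol]
    constructor
    · rintro ⟨j1, h1, he1, he2, hjk, hkj1, hlt⟩
      have hk2 : 2 ≤ k := by omega
      have hj12 : 2 ≤ j1 := by omega
      exact ⟨j1, h1, by rw [epsP_neg E j1 hj12]; linarith,
        by rw [epsP_neg E k hk2]; linarith, hjk, hkj1, hlt⟩
    · rintro ⟨k1, h1, he1, he2, hjk, hkk1, hlt⟩
      have hk2 : 2 ≤ k := by omega
      have hk12 : 2 ≤ k1 := by omega
      refine ⟨k1, h1, ?_, ?_, hjk, hkk1, hlt⟩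
      · have := epsP_neg E k1 hk12
        rw [this] at he1; linarith
      · have := epsP_neg E k hk2
        rw [this] at he2; linarith
  · -- scondII ↔ scondIV
    intro j k hj hk
    rw [hcol]
    constructor
    · rintro ⟨k1, h1, he1, he2, hjk, hkk1, hlt⟩
      have hk2 : 2 ≤ k := by omega
      have hk12 : 2 ≤ k1 := by omega
      exact ⟨k1, h1, by rw [epsP_neg E k hk2]; linarith,
        by rw [epsP_neg E k1 hk12]; linarith, hjk, hkk1, hlt⟩
    · rintro ⟨j1, h1, he1, he2, hjk, hkj1, hlt⟩
      have hk2 : 2 ≤ k := by omega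
      have hj12 : 2 ≤ j1 := by omega
      refine ⟨j1, h1, ?_, ?_, hjk, hkj1, hlt⟩
      · have := epsP_neg E k hk2
        rw [this] at he1; linarith
      · have := epsP_neg E j1 hj12
        rw [this] at he2; linarith
end
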